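/- arXiv:0904.1053 — 5 statements merged into one kernel-verified Lean document; each statement's English description precedes it below -/
import Mathlib

section
/- For every real n > 0, ∫_0^∞ ( 1/(e^{2πx} - 1) - 1/(2πx) ) e^{-2πnx} dx = (1/(2π)) ( log n - ψ(1+n) ). -/
open Real MeasureTheory Filter

/-- The digamma function `ψ = Γ'/Γ`. -/
noncomputable def digamma (x : ℝ) : ℝ := deriv Real.Gamma x / Real.Gamma x

open Set

-- basic exponential integral
lemma integral_exp_neg_mul (c : ℝ) (hc : 0 < c) :
    ∫ t in Ioi (0:ℝ), Real.exp (-(c * t)) = 1 / c := by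
  have := MeasureTheory.integral_comp_mul_left_Ioi (fun x => Real.exp (-x)) 0 hc
  simp only [mul_zero] at this
  rw [show (fun t : ℝ => Real.exp (-(c * t))) = (fun t : ℝ => Real.exp (-(c * t))) from rfl]
  calc ∫ t in Ioi (0:ℝ), Real.exp (-(c * t)) = c⁻¹ • ∫ x in Ioi (0:ℝ), Real.exp (-x) := this
    _ = 1 / c := by rw [integral_exp_neg_Ioi_zero]; simp [one_div]

lemma integrableOn_exp_neg_mul (c : ℝ) (hc : 0 < c) :
    IntegrableOn (fun t : ℝ => Real.exp (-(c * t))) (Ioi (0:ℝ)) := by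
  simpa [neg_mul] using exp_neg_integrableOn_Ioi 0 hc

-- pointwise bound
lemma abs_g_le_one {t : ℝ} (ht : 0 < t) :
    |1 / (Real.exp t - 1) - 1 / t| ≤ 1 := by
  have h1 : t + 1 ≤ Real.exp t := Real.add_one_le_exp t
  have h2 : (-t) + 1 ≤ Real.exp (-t) := Real.add_one_le_exp (-t)
  have het : 0 < Real.exp t - 1 := by linarith
  have hinv : Real.exp (-t) = (Real.exp t)⁻¹ := Real.exp_neg t
  have hep : 0 < Real.exp t := Real.exp_pos t
  rw [abs_le]
  constructor
  · -- -1 ≤ 1/(e^t-1) - 1/t  ⟺  e^t (1-t) ≤ 1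
    rw [div_sub_div _ _ het.ne' ht.ne', le_div_iff₀ (by positivity)]
    have key : (1 - t) * Real.exp t ≤ 1 := by
      have h3 : Real.exp t * Real.exp (-t) = 1 := by
        rw [← Real.exp_add]; simp
      nlinarith [mul_le_mul_of_nonneg_left h2 hep.le]
    nlinarith
  · -- 1/(e^t-1) ≤ 1/t since t ≤ e^t - 1
    have : 1 / (Real.exp t - 1) ≤ 1 / t := by
      apply one_div_le_one_div_of_le ht; linarith
    have h4 : 0 < 1 / t := by positivity
    linarith

noncomputable def Ifun (n : ℝ) : ℝ :=
  ∫ t in Ioi (0:ℝ), (1 / (Real.exp t - 1) - 1 / t) * Real.exp (-(n * t))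

lemma continuousOn_g :
    ContinuousOn (fun t : ℝ => 1 / (Real.exp t - 1) - 1 / t) (Ioi (0:ℝ)) := by
  apply ContinuousOn.sub
  · apply ContinuousOn.div continuousOn_const
    · exact (Real.continuous_exp.continuousOn).sub continuousOn_const
    · intro t ht
      have h1 : t + 1 ≤ Real.exp t := Real.add_one_le_exp t
      have : (0:ℝ) < t := ht
      intro h; rw [sub_eq_zero] at h; nlinarith [h.symm]
  · exact ContinuousOn.div continuousOn_const continuousOn_id
      (fun t ht => ne_of_gt ht)

lemma integrableOn_main (c : ℝ) (hc : 0 < c) :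
    IntegrableOn (fun t : ℝ => (1 / (Real.exp t - 1) - 1 / t) * Real.exp (-(c * t)))
      (Ioi (0:ℝ)) := by
  apply Integrable.mono (integrableOn_exp_neg_mul c hc)
  · exact (continuousOn_g.mul (Real.continuous_exp.comp (by continuity)).continuousOn
      ).aestronglyMeasurable measurableSet_Ioi
  · filter_upwards [ae_restrict_mem measurableSet_Ioi] with t ht
    rw [norm_mul, Real.norm_eq_abs, Real.norm_eq_abs, abs_exp]
    calc |1 / (Real.exp t - 1) - 1 / t| * Real.exp (-(c*t))
        ≤ 1 * Real.exp (-(c*t)) :=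
          mul_le_mul_of_nonneg_right (abs_g_le_one ht) (Real.exp_pos _).le
      _ = Real.exp (-(c*t)) := one_mul _

lemma abs_Ifun_le (n : ℝ) (hn : 0 < n) : |Ifun n| ≤ 1 / n := by
  have h1 : |Ifun n| ≤ ∫ t in Ioi (0:ℝ), Real.exp (-(n * t)) := by
    rw [Ifun, ← Real.norm_eq_abs]
    apply norm_integral_le_of_norm_le (integrableOn_exp_neg_mul n hn)
    filter_upwards [ae_restrict_mem measurableSet_Ioi] with t ht
    rw [norm_mul, Real.norm_eq_abs, Real.norm_eq_abs, abs_exp]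
    calc |1 / (Real.exp t - 1) - 1 / t| * Real.exp (-(n*t))
        ≤ 1 * Real.exp (-(n*t)) :=
          mul_le_mul_of_nonneg_right (abs_g_le_one ht) (Real.exp_pos _).le
      _ = Real.exp (-(n*t)) := one_mul _
  rwa [integral_exp_neg_mul n hn] at h1

lemma gamma_ne_neg (x : ℝ) (hx : 0 < x) : ∀ m : ℕ, x ≠ -m := by
  intro m h
  have : (0:ℝ) ≤ (m:ℝ) := Nat.cast_nonneg m
  rw [h] at hx; linarith

lemma digamma_add_one {x : ℝ} (hx : 0 < x) : digamma (x + 1) = digamma x + 1 / x := by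
  have hx0 : x ≠ 0 := hx.ne'
  have hdG : DifferentiableAt ℝ Real.Gamma x := Real.differentiableAt_Gamma (gamma_ne_neg x hx)
  have hdG1 : DifferentiableAt ℝ Real.Gamma (x + 1) :=
    Real.differentiableAt_Gamma (gamma_ne_neg _ (by linarith))
  have h1 : HasDerivAt (fun y => Real.Gamma (y + 1)) (deriv Real.Gamma (x + 1)) x := by
    simpa [Function.comp_def] using (hdG1.hasDerivAt.comp x ((hasDerivAt_id x).add_const 1))
  have hev : (fun y => Real.Gamma (y + 1)) =ᶠ[nhds x] fun y => y * Real.Gamma y := by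
    filter_upwards [eventually_ne_nhds hx0] with y hy
    exact Real.Gamma_add_one hy
  have h2 : HasDerivAt (fun y => y * Real.Gamma y)
      (deriv Real.Gamma (x + 1)) x := h1.congr_of_eventuallyEq hev.symm
  have h3 : HasDerivAt (fun y => y * Real.Gamma y)
      (1 * Real.Gamma x + x * deriv Real.Gamma x) x :=
    (hasDerivAt_id x).mul hdG.hasDerivAt
  have h4 : deriv Real.Gamma (x + 1) = Real.Gamma x + x * deriv Real.Gamma x := by
    have := h2.unique h3; rw [this]; ring
  have hG : Real.Gamma x ≠ 0 := (Real.Gamma_pos_of_pos hx).ne'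
  rw [digamma, digamma, h4, Real.Gamma_add_one hx0]
  field_simp
  ring

lemma deriv_logGamma {x : ℝ} (hx : 0 < x) :
    deriv (Real.log ∘ Real.Gamma) x = digamma x := by
  have hdG : DifferentiableAt ℝ Real.Gamma x := Real.differentiableAt_Gamma (gamma_ne_neg x hx)
  have hG : Real.Gamma x ≠ 0 := (Real.Gamma_pos_of_pos hx).ne'
  exact (hdG.hasDerivAt.log hG).deriv

lemma slope_logGamma {x : ℝ} (hx : 0 < x) :
    slope (Real.log ∘ Real.Gamma) x (x + 1) = Real.log x := by
  have hG : Real.Gamma x ≠ 0 := (Real.Gamma_pos_of_pos hx).ne'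
  rw [slope_def_field]
  simp only [Function.comp_apply]
  rw [Real.Gamma_add_one hx.ne', Real.log_mul hx.ne' hG]
  field_simp
  ring

lemma digamma_le_log {x : ℝ} (hx : 0 < x) : digamma x ≤ Real.log x := by
  have hd : DifferentiableAt ℝ (Real.log ∘ Real.Gamma) x :=
    (Real.differentiableAt_Gamma (gamma_ne_neg x hx)).log (Real.Gamma_pos_of_pos hx).ne'
  have := Real.convexOn_log_Gamma.deriv_le_slope (mem_Ioi.mpr hx)
    (mem_Ioi.mpr (by linarith : (0:ℝ) < x + 1)) (lt_add_one x) hd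
  rwa [deriv_logGamma hx, slope_logGamma hx] at this

lemma log_le_digamma_add_one {x : ℝ} (hx : 0 < x) : Real.log x ≤ digamma (x + 1) := by
  have hd : DifferentiableAt ℝ (Real.log ∘ Real.Gamma) (x + 1) :=
    (Real.differentiableAt_Gamma (gamma_ne_neg _ (by linarith))).log
      (Real.Gamma_pos_of_pos (by linarith)).ne'
  have := Real.convexOn_log_Gamma.slope_le_deriv (mem_Ioi.mpr hx)
    (mem_Ioi.mpr (by linarith : (0:ℝ) < x + 1)) (lt_add_one x) hd
  rwa [deriv_logGamma (by linarith), slope_logGamma hx] at this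

lemma abs_log_sub_digamma {x : ℝ} (hx : 0 < x) :
    |Real.log x - digamma (x + 1)| ≤ 1 / x := by
  have h1 := log_le_digamma_add_one hx
  have h2 : digamma (x + 1) ≤ Real.log x + 1 / x := by
    rw [digamma_add_one hx]
    have := digamma_le_log hx
    linarith
  rw [abs_le]
  have : 0 < 1/x := by positivity
  constructor <;> linarith

lemma inner_exp_integral {t : ℝ} (ht : 0 < t) (a b : ℝ) (hab : a ≤ b) :
    ∫ s in Ioc a b, Real.exp (-(s * t))
      = (Real.exp (-(a * t)) - Real.exp (-(b * t))) / t := by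
  have hderiv : ∀ s : ℝ, HasDerivAt (fun s => -(Real.exp (-(s * t)) / t))
      (Real.exp (-(s * t))) s := by
    intro s
    have h1 : HasDerivAt (fun s : ℝ => -(s * t)) (-t) s := by
      have := ((hasDerivAt_id s).mul_const t).neg; rw [one_mul] at this; exact this
    have h2 := (Real.hasDerivAt_exp (-(s * t))).comp s h1
    have h3 : HasDerivAt (fun s => -(Real.exp (-(s * t)) / t)) (-(Real.exp (-(s * t)) * -t / t)) s :=
      (h2.div_const t).neg
    convert h3 using 1
    field_simp
  have hcont : Continuous fun s : ℝ => Real.exp (-(s * t)) := by continuity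
  have := intervalIntegral.integral_eq_sub_of_hasDerivAt
    (f := fun s => -(Real.exp (-(s * t)) / t)) (fun s _ => hderiv s)
    (hcont.intervalIntegrable a b)
  rw [← intervalIntegral.integral_of_le hab, this]
  field_simp
  ring

lemma frullani {a b : ℝ} (ha : 0 < a) (hab : a < b) :
    ∫ t in Ioi (0:ℝ), (Real.exp (-(a * t)) - Real.exp (-(b * t))) / t
      = Real.log b - Real.log a := by
  have hb : 0 < b := ha.trans hab
  have hcont : Continuous fun p : ℝ × ℝ => Real.exp (-(p.2 * p.1)) := by continuity
  set μ := volume.restrict (Ioi (0:ℝ))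
  set ν := volume.restrict (Ioc a b)
  have hInt : Integrable (fun p : ℝ × ℝ => Real.exp (-(p.2 * p.1))) (μ.prod ν) := by
    rw [integrable_prod_iff (hcont.aestronglyMeasurable)]
    constructor
    · refine Eventually.of_forall fun t => ?_
      exact (Continuous.integrableOn_Ioc (by continuity))
    · -- bound t ↦ ∫ s, ‖exp(-(s*t))‖ dν by (b-a)·exp(-(a*t))
      apply Integrable.mono ((integrableOn_exp_neg_mul a ha).const_mul (b - a))
      · apply AEStronglyMeasurable.integral_prod_right'
          (f := fun p : ℝ × ℝ => ‖Real.exp (-(p.2 * p.1))‖)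
        exact hcont.norm.aestronglyMeasurable
      · filter_upwards [ae_restrict_mem measurableSet_Ioi] with t (ht : 0 < t)
        rw [Real.norm_eq_abs, abs_of_nonneg (integral_nonneg fun s => norm_nonneg _)]
        have hbound : ∀ s ∈ Ioc a b, ‖‖Real.exp (-(s * t))‖‖ ≤ Real.exp (-(a * t)) := by
          intro s hs
          rw [norm_norm, Real.norm_eq_abs, abs_exp, Real.exp_le_exp]
          nlinarith [hs.1.le]
        have hvol : volume (Ioc a b) < ⊤ := by simp [Real.volume_Ioc, ENNReal.ofReal_lt_top]
        have := norm_setIntegral_le_of_norm_le_const (μ := volume) hvol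
          (f := fun s => ‖Real.exp (-(s * t))‖) hbound
        rw [Real.norm_eq_abs, abs_of_nonneg (integral_nonneg fun s => norm_nonneg _)] at this
        calc (∫ s, ‖Real.exp (-(s * t))‖ ∂ν)
            ≤ Real.exp (-(a * t)) * (volume (Ioc a b)).toReal := this
          _ = (b - a) * Real.exp (-(a * t)) := by
              rw [Real.volume_Ioc, ENNReal.toReal_ofReal (by linarith)]; ring
          _ ≤ ‖(b - a) * Real.exp (-(a * t))‖ := le_abs_self _
  have hswap := MeasureTheory.integral_integral_swap
    (f := fun t s => Real.exp (-(s * t))) hInt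
  calc ∫ t in Ioi (0:ℝ), (Real.exp (-(a * t)) - Real.exp (-(b * t))) / t
      = ∫ t in Ioi (0:ℝ), ∫ s in Ioc a b, Real.exp (-(s * t)) := by
        refine setIntegral_congr_fun measurableSet_Ioi fun t ht => ?_
        rw [inner_exp_integral ht a b hab.le]
    _ = ∫ s in Ioc a b, ∫ t in Ioi (0:ℝ), Real.exp (-(s * t)) := hswap
    _ = ∫ s in Ioc a b, 1 / s := by
        refine setIntegral_congr_fun measurableSet_Ioc fun s hs => ?_
        exact integral_exp_neg_mul s (ha.trans_le hs.1.le)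
    _ = Real.log b - Real.log a := by
        rw [← intervalIntegral.integral_of_le hab.le,
          integral_one_div (by
            rw [Set.uIcc_of_le hab.le]
            intro h
            exact absurd h.1 (not_le.mpr ha)), Real.log_div hb.ne' ha.ne']

lemma pointwise_rec {n t : ℝ} (ht : 0 < t) :
    (1 / (Real.exp t - 1) - 1 / t) * Real.exp (-(n * t))
      - (1 / (Real.exp t - 1) - 1 / t) * Real.exp (-((n + 1) * t))
    = Real.exp (-((n + 1) * t))
      - (Real.exp (-(n * t)) - Real.exp (-((n + 1) * t))) / t := by
  have hE1 : (0:ℝ) < Real.exp t - 1 := by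
    have := Real.add_one_le_exp t; linarith
  have hBE : Real.exp (-((n + 1) * t)) * Real.exp t = Real.exp (-(n * t)) := by
    rw [← Real.exp_add]; ring_nf
  field_simp
  linear_combination (norm := ring_nf) (-t) * hBE

lemma Ifun_rec (n : ℝ) (hn : 0 < n) :
    Ifun n - Ifun (n + 1) = 1 / (n + 1) - (Real.log (n + 1) - Real.log n) := by
  have hn1 : (0:ℝ) < n + 1 := by linarith
  have hIa := integrableOn_main n hn
  have hIb := integrableOn_main (n + 1) hn1
  have hIe := integrableOn_exp_neg_mul (n + 1) hn1
  have hfr : IntegrableOn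
      (fun t : ℝ => (Real.exp (-(n * t)) - Real.exp (-((n + 1) * t))) / t) (Ioi 0) := by
    have hsub : IntegrableOn
        ((fun t : ℝ => Real.exp (-((n + 1) * t)))
          - ((fun t : ℝ => (1 / (Real.exp t - 1) - 1 / t) * Real.exp (-(n * t)))
            - fun t : ℝ => (1 / (Real.exp t - 1) - 1 / t) * Real.exp (-((n + 1) * t))))
        (Ioi 0) := hIe.sub (hIa.sub hIb)
    apply hsub.congr_fun ?_ measurableSet_Ioi
    intro t ht
    have h := pointwise_rec (n := n) (ht : 0 < t)
    simp only [Pi.sub_apply]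
    linarith [h]
  calc Ifun n - Ifun (n + 1)
      = ∫ t in Ioi (0:ℝ),
          ((1 / (Real.exp t - 1) - 1 / t) * Real.exp (-(n * t))
            - (1 / (Real.exp t - 1) - 1 / t) * Real.exp (-((n + 1) * t))) := by
        rw [Ifun, Ifun, ← integral_sub hIa hIb]
    _ = ∫ t in Ioi (0:ℝ),
          (Real.exp (-((n + 1) * t))
            - (Real.exp (-(n * t)) - Real.exp (-((n + 1) * t))) / t) := by
        refine setIntegral_congr_fun measurableSet_Ioi fun t ht => ?_
        exact pointwise_rec ht
    _ = (∫ t in Ioi (0:ℝ), Real.exp (-((n + 1) * t)))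
          - ∫ t in Ioi (0:ℝ), (Real.exp (-(n * t)) - Real.exp (-((n + 1) * t))) / t :=
        integral_sub hIe hfr
    _ = 1 / (n + 1) - (Real.log (n + 1) - Real.log n) := by
        rw [integral_exp_neg_mul _ hn1, frullani hn (by linarith : n < n + 1)]

lemma Ifun_eq (n : ℝ) (hn : 0 < n) : Ifun n = Real.log n - digamma (1 + n) := by
  set D : ℝ → ℝ := fun m => Ifun m - (Real.log m - digamma (1 + m)) with hD
  have hstep : ∀ m : ℝ, 0 < m → D (m + 1) = D m := by
    intro m hm
    have h1 := Ifun_rec m hm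
    have h2 : digamma (1 + (m + 1)) = digamma (1 + m) + 1 / (1 + m) := by
      have := digamma_add_one (x := 1 + m) (by linarith)
      rw [← this]; ring_nf
    simp only [hD]
    rw [h2]
    have : Ifun (m+1) = Ifun m - (1 / (m + 1) - (Real.log (m + 1) - Real.log m)) := by
      linarith
    rw [this]; ring
  have hper : ∀ k : ℕ, D (n + k) = D n := by
    intro k
    induction k with
    | zero => simp
    | succ k ih =>
      have h1 : n + (k + 1 : ℕ) = (n + k) + 1 := by push_cast; ring
      rw [h1, hstep (n + k) (by positivity), ih]
  have hbound : ∀ k : ℕ, |D n| ≤ 2 / (n + k) := by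
    intro k
    rw [← hper k]
    have hpos : (0:ℝ) < n + k := by positivity
    have h1 := abs_Ifun_le (n + k) hpos
    have h2 : |Real.log (n + k) - digamma (1 + (n + k))| ≤ 1 / (n + k) := by
      have := abs_log_sub_digamma hpos
      rwa [add_comm (n + (k:ℝ)) 1] at this
    calc |D (n + k)| ≤ |Ifun (n + k)| + |Real.log (n + k) - digamma (1 + (n + k))| :=
          abs_sub (Ifun (n + k)) _
      _ ≤ 1 / (n + k) + 1 / (n + k) := add_le_add h1 h2
      _ = 2 / (n + k) := by ring
  have hlim : Tendsto (fun k : ℕ => 2 / (n + k)) atTop (nhds 0) := by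
    apply Filter.Tendsto.div_atTop tendsto_const_nhds
    exact tendsto_atTop_add_const_left _ n tendsto_natCast_atTop_atTop
  have h0 : |D n| ≤ 0 := ge_of_tendsto' hlim hbound
  have : D n = 0 := abs_eq_zero.mp (le_antisymm h0 (abs_nonneg _))
  simp only [hD] at this
  linarith

theorem integral_exp_digamma (n : ℝ) (hn : 0 < n) :
    ∫ x in Set.Ioi (0 : ℝ),
        (1 / (Real.exp (2 * π * x) - 1) - 1 / (2 * π * x)) * Real.exp (-(2 * π * n * x))
      = (1 / (2 * π)) * (Real.log n - digamma (1 + n)) := by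
  have hc : (0:ℝ) < 2 * π := by positivity
  have heq : (fun x : ℝ =>
      (1 / (Real.exp (2 * π * x) - 1) - 1 / (2 * π * x)) * Real.exp (-(2 * π * n * x)))
      = fun x : ℝ => (1 / (Real.exp (2 * π * x) - 1) - 1 / (2 * π * x))
          * Real.exp (-(n * (2 * π * x))) := by
    funext x; ring_nf
  rw [heq]
  have := MeasureTheory.integral_comp_mul_left_Ioi
    (fun t : ℝ => (1 / (Real.exp t - 1) - 1 / t) * Real.exp (-(n * t))) 0 hc
  simp only [mul_zero] at this
  rw [this, ← Ifun, Ifun_eq n hn, smul_eq_mul, one_div]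
end

section
/- Let φ(x) := ψ(x) + 1/(2x) - log x, where ψ = Γ'/Γ is the digamma function. Then for every real α > 0, Σ_{n=1}^∞ φ(nα) = -(2π/α) ∫_0^∞ (1/(e^{2πt} - 1)) ( 1/(e^{2πt/α} - 1) - α/(2πt) + 1/2 ) dt; in particular the series converges and the integral converges. -/
open Real MeasureTheory Filter

/-- `φ(x) := ψ(x) + 1/(2x) - log x`. -/
noncomputable def phi (x : ℝ) : ℝ := digamma x + 1 / (2 * x) - Real.log x

namespace SumPhiAux

open Set

noncomputable def f (s : ℝ) : ℝ := 1 / (Real.exp s - 1) - 1 / s + 1 / 2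

lemma exp_sub_one_pos {s : ℝ} (hs : 0 < s) : 0 < Real.exp s - 1 := by
  have := Real.add_one_le_exp s
  nlinarith [Real.add_one_le_exp s, hs]

/-- `1 + eˢ (s - 1) ≥ 0` for `s ≥ 0`. -/
lemma aux_H {s : ℝ} (hs : 0 ≤ s) : 0 ≤ 1 + Real.exp s * (s - 1) := by
  set H : ℝ → ℝ := fun s => 1 + Real.exp s * (s - 1) with hH
  have hder : ∀ y : ℝ, HasDerivAt H (Real.exp y * y) y := by
    intro y
    have h1 : HasDerivAt (fun y : ℝ => Real.exp y * (y - 1))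
        (Real.exp y * (y - 1) + Real.exp y * 1) y :=
      (Real.hasDerivAt_exp y).mul ((hasDerivAt_id y).sub_const 1)
    have h2 := h1.const_add 1
    have : Real.exp y * (y - 1) + Real.exp y * 1 = Real.exp y * y := by ring
    rw [this] at h2
    exact h2
  have hmono : MonotoneOn H (Ici (0:ℝ)) := by
    apply monotoneOn_of_deriv_nonneg (convex_Ici 0)
    · exact (continuous_const.add
        (Real.continuous_exp.mul (continuous_id.sub continuous_const))).continuousOn
    · intro y hy
      exact (hder y).differentiableAt.differentiableWithinAt
    · intro y hy
      rw [(hder y).deriv]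
      have : 0 < y := by simpa [interior_Ici] using hy
      positivity
  have h0 : H 0 = 0 := by simp [hH]
  have := hmono (self_mem_Ici) (mem_Ici.mpr hs) hs
  simpa [h0] using this

/-- `eˢ (2 - s) ≤ 2 + s` for `s ≥ 0`. -/
lemma aux_K {s : ℝ} (hs : 0 ≤ s) : Real.exp s * (2 - s) ≤ 2 + s := by
  set K : ℝ → ℝ := fun s => (2 + s) - Real.exp s * (2 - s) with hK
  have hder : ∀ y : ℝ, HasDerivAt K (1 + Real.exp y * (y - 1)) y := by
    intro y
    have h1 : HasDerivAt (fun y : ℝ => Real.exp y * (2 - y))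
        (Real.exp y * (2 - y) + Real.exp y * (-1)) y :=
      (Real.hasDerivAt_exp y).mul ((hasDerivAt_id y).const_sub 2)
    have h2 := ((hasDerivAt_id y).const_add 2).sub h1
    have : (1 : ℝ) - (Real.exp y * (2 - y) + Real.exp y * (-1)) = 1 + Real.exp y * (y - 1) := by
      ring
    rw [this] at h2
    exact h2
  have hmono : MonotoneOn K (Ici (0:ℝ)) := by
    apply monotoneOn_of_deriv_nonneg (convex_Ici 0)
    · exact Continuous.continuousOn (by
        have : Continuous K := by
          exact (continuous_const.add continuous_id).sub
            (Real.continuous_exp.mul (continuous_const.sub continuous_id))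
        exact this)
    · intro y hy
      exact (hder y).differentiableAt.differentiableWithinAt
    · intro y hy
      rw [(hder y).deriv]
      have hy0 : 0 < y := by simpa [interior_Ici] using hy
      exact aux_H hy0.le
  have h0 : K 0 = 0 := by simp [hK]
  have := hmono (self_mem_Ici) (mem_Ici.mpr hs) hs
  have : 0 ≤ K s := by simpa [h0] using this
  simp only [hK] at this
  linarith

lemma f_nonneg {s : ℝ} (hs : 0 < s) : 0 ≤ f s := by
  have hE := exp_sub_one_pos hs
  rcases le_or_gt 2 s with h2 | h2
  · have h1 : 1 / s ≤ 1 / 2 := by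
      apply one_div_le_one_div_of_le <;> linarith
    have h3 : 0 < 1 / (Real.exp s - 1) := by positivity
    simp only [f]; linarith
  · -- 0 < s < 2 : use exp s * (2 - s) ≤ 2 + s
    have hkey := aux_K hs.le
    have h2s : 0 < 2 - s := by linarith
    have hle : Real.exp s - 1 ≤ 2 * s / (2 - s) := by
      rw [le_div_iff₀ h2s]; nlinarith
    have hpos : (0:ℝ) < 2 * s / (2 - s) := by positivity
    have h4 : 1 / (2 * s / (2 - s)) ≤ 1 / (Real.exp s - 1) :=
      one_div_le_one_div_of_le hE hle
    have h5 : 1 / (2 * s / (2 - s)) = 1 / s - 1 / 2 := by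
      rw [one_div_div, div_sub_div _ _ hs.ne' (two_ne_zero : (2:ℝ) ≠ 0)]
      ring_nf
    simp only [f]; linarith

lemma f_le {s : ℝ} (hs : 0 < s) : f s ≤ s / 4 := by
  have hE := exp_sub_one_pos hs
  have hQ : 0 < 1 - s / 2 + s ^ 2 / 4 := by nlinarith [sq_nonneg (s - 1)]
  have hexp : 1 + s + s ^ 2 / 2 + s ^ 3 / 6 ≤ Real.exp s := by
    have h := Real.sum_le_exp_of_nonneg hs.le 4
    have h4 : ∑ i ∈ Finset.range 4, s ^ i / (Nat.factorial i) =
        1 + s + s ^ 2 / 2 + s ^ 3 / 6 := by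
      simp [Finset.sum_range_succ, Nat.factorial]
    linarith [h4 ▸ h]
  have hkey : s ≤ (Real.exp s - 1) * (1 - s / 2 + s ^ 2 / 4) := by
    nlinarith [mul_le_mul_of_nonneg_right
      (show s + s ^ 2 / 2 + s ^ 3 / 6 ≤ Real.exp s - 1 by linarith) hQ.le,
      pow_pos hs 3, pow_pos hs 4, pow_pos hs 5]
  have h3 : s / (1 - s / 2 + s ^ 2 / 4) ≤ Real.exp s - 1 := by
    rw [div_le_iff₀ hQ]; linarith
  have h4 : 1 / (Real.exp s - 1) ≤ 1 / (s / (1 - s / 2 + s ^ 2 / 4)) :=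
    one_div_le_one_div_of_le (by positivity) h3
  have h5 : 1 / (s / (1 - s / 2 + s ^ 2 / 4)) = 1 / s - 1 / 2 + s / 4 := by
    field_simp
  simp only [f]; linarith

lemma continuousOn_f : ContinuousOn f (Ioi (0:ℝ)) := by
  apply ContinuousOn.add
  · apply ContinuousOn.sub
    · exact continuousOn_const.div
        ((Real.continuous_exp.continuousOn).sub continuousOn_const)
        (fun s hs => (exp_sub_one_pos (mem_Ioi.mp hs)).ne')
    · exact continuousOn_const.div continuousOn_id (fun s hs => (mem_Ioi.mp hs).ne')
  · exact continuousOn_const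

/-! ### Basic exponential integrals -/

lemma integrableOn_exp_neg_mul {c : ℝ} (hc : 0 < c) :
    IntegrableOn (fun s => Real.exp (-(c * s))) (Ioi (0:ℝ)) := by
  simpa [neg_mul] using exp_neg_integrableOn_Ioi 0 hc

lemma integral_exp_neg_mul {c : ℝ} (hc : 0 < c) :
    ∫ s in Ioi (0:ℝ), Real.exp (-(c * s)) = 1 / c := by
  have h := integral_comp_mul_left_Ioi (fun x => Real.exp (-x)) 0 hc
  simp only [mul_zero] at h
  rw [h, integral_exp_neg_Ioi_zero, smul_eq_mul, mul_one, one_div]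

lemma integrableOn_id_mul_exp_neg : IntegrableOn (fun x : ℝ => x * Real.exp (-x)) (Ioi (0:ℝ)) := by
  have h := Real.GammaIntegral_convergent (by norm_num : (0:ℝ) < 2)
  apply h.congr_fun _ measurableSet_Ioi
  intro x hx
  show Real.exp (-x) * x ^ ((2:ℝ) - 1) = x * Real.exp (-x)
  rw [show (2:ℝ) - 1 = 1 by norm_num, Real.rpow_one, mul_comm]

lemma integral_id_mul_exp_neg : ∫ x in Ioi (0:ℝ), x * Real.exp (-x) = 1 := by
  have h := Real.Gamma_eq_integral (by norm_num : (0:ℝ) < 2)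
  have h2 : Real.Gamma 2 = 1 := by
    rw [show (2:ℝ) = (1:ℕ) + 1 by norm_num, Real.Gamma_nat_eq_factorial]
    simp
  rw [← h2, h]
  apply setIntegral_congr_fun measurableSet_Ioi
  intro x hx
  show x * Real.exp (-x) = Real.exp (-x) * x ^ ((2:ℝ) - 1)
  rw [show (2:ℝ) - 1 = 1 by norm_num, Real.rpow_one, mul_comm]

lemma integrableOn_mul_exp_neg_mul {c : ℝ} (hc : 0 < c) :
    IntegrableOn (fun s => s * Real.exp (-(c * s))) (Ioi (0:ℝ)) := by
  have h := (integrableOn_Ioi_comp_mul_left_iff (fun x : ℝ => x * Real.exp (-x)) 0 hc).mpr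
    (by simpa using integrableOn_id_mul_exp_neg)
  have heq : (fun s : ℝ => s * Real.exp (-(c * s)))
      = fun s : ℝ => c⁻¹ * (c * s * Real.exp (-(c * s))) := by
    funext s
    rw [show c * s * Real.exp (-(c * s)) = c * (s * Real.exp (-(c * s))) from by ring,
      ← mul_assoc, inv_mul_cancel₀ hc.ne', one_mul]
  rw [heq]
  exact h.const_mul _

lemma integral_mul_exp_neg_mul {c : ℝ} (hc : 0 < c) :
    ∫ s in Ioi (0:ℝ), s * Real.exp (-(c * s)) = 1 / c ^ 2 := by
  have h := integral_comp_mul_left_Ioi (fun x : ℝ => x * Real.exp (-x)) 0 hc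
  simp only [mul_zero] at h
  rw [integral_id_mul_exp_neg, smul_eq_mul, mul_one] at h
  have h2 : ∫ s in Ioi (0:ℝ), c * s * Real.exp (-(c * s))
      = c * ∫ s in Ioi (0:ℝ), s * Real.exp (-(c * s)) := by
    rw [← integral_const_mul]
    congr 1; funext s; ring
  rw [h2] at h
  field_simp at h ⊢
  nlinarith [h]

/-! ### The Laplace transform `g` of `f` -/

noncomputable def g (x : ℝ) : ℝ := ∫ s in Ioi (0:ℝ), Real.exp (-(x * s)) * f s

lemma continuousOn_integrand {x : ℝ} :
    ContinuousOn (fun s => Real.exp (-(x * s)) * f s) (Ioi (0:ℝ)) :=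
  ((Real.continuous_exp.comp ((continuous_const.mul continuous_id).neg)).continuousOn).mul
    continuousOn_f

lemma integrand_nonneg {x : ℝ} {s : ℝ} (hs : 0 < s) : 0 ≤ Real.exp (-(x * s)) * f s :=
  mul_nonneg (Real.exp_pos _).le (f_nonneg hs)

lemma integrableOn_F {x : ℝ} (hx : 0 < x) :
    IntegrableOn (fun s => Real.exp (-(x * s)) * f s) (Ioi (0:ℝ)) := by
  have hbound : IntegrableOn (fun s => s * Real.exp (-(x * s)) / 4) (Ioi (0:ℝ)) :=
    (integrableOn_mul_exp_neg_mul hx).div_const 4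
  apply hbound.mono' (continuousOn_integrand.aestronglyMeasurable measurableSet_Ioi)
  rw [ae_restrict_iff' measurableSet_Ioi]
  filter_upwards with s hs
  have hs' : 0 < s := hs
  rw [Real.norm_eq_abs, abs_of_nonneg (integrand_nonneg hs')]
  calc Real.exp (-(x * s)) * f s ≤ Real.exp (-(x * s)) * (s / 4) :=
        mul_le_mul_of_nonneg_left (f_le hs') (Real.exp_pos _).le
    _ = s * Real.exp (-(x * s)) / 4 := by ring

lemma g_nonneg {x : ℝ} : 0 ≤ g x := by
  apply setIntegral_nonneg measurableSet_Ioi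
  intro s hs
  exact integrand_nonneg hs

lemma g_le {x : ℝ} (hx : 0 < x) : g x ≤ 1 / (4 * x ^ 2) := by
  have h1 : g x ≤ ∫ s in Ioi (0:ℝ), s * Real.exp (-(x * s)) / 4 := by
    apply setIntegral_mono_on (integrableOn_F hx)
      ((integrableOn_mul_exp_neg_mul hx).div_const 4) measurableSet_Ioi
    intro s hs
    have hs' : 0 < s := hs
    calc Real.exp (-(x * s)) * f s ≤ Real.exp (-(x * s)) * (s / 4) :=
          mul_le_mul_of_nonneg_left (f_le hs') (Real.exp_pos _).le
      _ = s * Real.exp (-(x * s)) / 4 := by ring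
  have h2 : ∫ s in Ioi (0:ℝ), s * Real.exp (-(x * s)) / 4
      = (1 / x ^ 2) / 4 := by
    rw [integral_div, integral_mul_exp_neg_mul hx]
  rw [h2] at h1
  calc g x ≤ (1 / x ^ 2) / 4 := h1
    _ = 1 / (4 * x ^ 2) := by ring

lemma ae_nonneg_restrict {f : ℝ → ℝ} {s : Set ℝ} (hs : MeasurableSet s)
    (h : ∀ x ∈ s, 0 ≤ f x) : 0 ≤ᵐ[volume.restrict s] f :=
  (ae_restrict_iff' hs).mpr (Filter.Eventually.of_forall h)

/-! ### Frullani-type integral -/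

lemma integral_exp_neg_mul_interval {s : ℝ} (hs : 0 < s) (a b : ℝ) :
    ∫ u in a..b, Real.exp (-(u * s)) =
      (Real.exp (-(a * s)) - Real.exp (-(b * s))) / s := by
  have hder : ∀ u : ℝ, HasDerivAt (fun u : ℝ => -(Real.exp (-(u * s)) / s))
      (Real.exp (-(u * s))) u := by
    intro u
    have h1 : HasDerivAt (fun u : ℝ => -(u * s)) (-s) u := (hasDerivAt_mul_const s).neg
    have h2 := (h1.exp.div_const s).neg
    have : -(Real.exp (-(u * s)) * -s / s) = Real.exp (-(u * s)) := by
      field_simp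
    rw [this] at h2
    exact h2
  rw [intervalIntegral.integral_eq_sub_of_hasDerivAt (fun u _ => hder u)
    ((Real.continuous_exp.comp ((continuous_id.mul continuous_const).neg)).intervalIntegrable a b)]
  ring

lemma frullani_integrand_nonneg {x : ℝ} (hx : 0 < x) {s : ℝ} (hs : 0 < s) :
    0 ≤ (Real.exp (-(x * s)) - Real.exp (-((x + 1) * s))) / s := by
  apply div_nonneg _ hs.le
  have : -((x + 1) * s) ≤ -(x * s) := by nlinarith
  linarith [Real.exp_le_exp.mpr this]

lemma frullani_integrand_le {x : ℝ} (hx : 0 < x) {s : ℝ} (hs : 0 < s) :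
    (Real.exp (-(x * s)) - Real.exp (-((x + 1) * s))) / s ≤ Real.exp (-(x * s)) := by
  rw [div_le_iff₀ hs]
  have h1 : Real.exp (-((x + 1) * s)) = Real.exp (-(x * s)) * Real.exp (-s) := by
    rw [← Real.exp_add]; ring_nf
  rw [h1]
  have h2 : 1 - Real.exp (-s) ≤ s := by
    have := Real.add_one_le_exp (-s)
    linarith
  have h3 : 0 < Real.exp (-(x * s)) := Real.exp_pos _
  nlinarith [h3, h2]

lemma integrableOn_frullani {x : ℝ} (hx : 0 < x) :
    IntegrableOn (fun s => (Real.exp (-(x * s)) - Real.exp (-((x + 1) * s))) / s)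
      (Ioi (0:ℝ)) := by
  apply (integrableOn_exp_neg_mul hx).mono'
  · exact (ContinuousOn.div
      (((Real.continuous_exp.comp ((continuous_const.mul continuous_id).neg)).sub
        (Real.continuous_exp.comp ((continuous_const.mul continuous_id).neg))).continuousOn)
      continuousOn_id
      (fun s hs => (mem_Ioi.mp hs).ne')).aestronglyMeasurable measurableSet_Ioi
  · rw [ae_restrict_iff' measurableSet_Ioi]
    filter_upwards with s hs
    have hs' : 0 < s := hs
    rw [Real.norm_eq_abs, abs_of_nonneg (frullani_integrand_nonneg hx hs')]
    exact frullani_integrand_le hx hs'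

lemma frullani {x : ℝ} (hx : 0 < x) :
    ∫ s in Ioi (0:ℝ), (Real.exp (-(x * s)) - Real.exp (-((x + 1) * s))) / s
      = Real.log (x + 1) - Real.log x := by
  have hx1 : (0:ℝ) < x + 1 := by linarith
  set G : ℝ → ℝ := fun s => (Real.exp (-(x * s)) - Real.exp (-((x + 1) * s))) / s with hG
  -- measurability of the kernel
  have hker : Measurable (Function.uncurry fun s u : ℝ => ENNReal.ofReal (Real.exp (-(u * s)))) := by
    apply Measurable.ennreal_ofReal
    exact (Real.continuous_exp.comp
      ((continuous_snd.mul continuous_fst).neg)).measurable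
  have hswap := MeasureTheory.lintegral_lintegral_swap
    (μ := volume.restrict (Ioi (0:ℝ))) (ν := volume.restrict (Ioc x (x + 1)))
    (f := fun s u => ENNReal.ofReal (Real.exp (-(u * s)))) hker.aemeasurable
  -- LHS of swap equals ofReal (∫ G)
  have hL : ∫⁻ s in Ioi (0:ℝ), ∫⁻ u in Ioc x (x + 1), ENNReal.ofReal (Real.exp (-(u * s)))
      = ENNReal.ofReal (∫ s in Ioi (0:ℝ), G s) := by
    rw [MeasureTheory.ofReal_integral_eq_lintegral_ofReal (integrableOn_frullani hx)
      (ae_nonneg_restrict measurableSet_Ioi fun s hs => frullani_integrand_nonneg hx hs)]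
    apply setLIntegral_congr_fun measurableSet_Ioi
    intro s hs'
    beta_reduce
    have hs0 : 0 < s := hs'
    have hint : IntegrableOn (fun u => Real.exp (-(u * s))) (Ioc x (x + 1)) :=
      (Real.continuous_exp.comp ((continuous_id.mul continuous_const).neg)).integrableOn_Ioc
    rw [← MeasureTheory.ofReal_integral_eq_lintegral_ofReal hint
      (Filter.Eventually.of_forall fun u => (Real.exp_pos _).le)]
    congr 1
    rw [← intervalIntegral.integral_of_le (by linarith : x ≤ x + 1),
      integral_exp_neg_mul_interval hs0]
  -- RHS of swap equals ofReal (log (x+1) - log x)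
  have hR : ∫⁻ u in Ioc x (x + 1), ∫⁻ s in Ioi (0:ℝ), ENNReal.ofReal (Real.exp (-(u * s)))
      = ENNReal.ofReal (Real.log (x + 1) - Real.log x) := by
    have hlog : Real.log (x + 1) - Real.log x = ∫ u in Ioc x (x + 1), 1 / u := by
      rw [← intervalIntegral.integral_of_le (by linarith : x ≤ x + 1),
        integral_one_div (by
          intro h
          rcases Set.mem_uIcc.mp h with ⟨h1, _⟩ | ⟨_, h2⟩ <;> linarith),
        Real.log_div hx1.ne' hx.ne']
    have hint2 : IntegrableOn (fun u : ℝ => 1 / u) (Ioc x (x + 1)) := by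
      apply ((continuousOn_const.div continuousOn_id
          (fun u (hu : u ∈ Icc x (x+1)) => by
            have : x ≤ u := hu.1
            exact (lt_of_lt_of_le hx this).ne')).integrableOn_compact isCompact_Icc).mono_set
        Ioc_subset_Icc_self
    rw [hlog, MeasureTheory.ofReal_integral_eq_lintegral_ofReal hint2
      (ae_nonneg_restrict measurableSet_Ioc fun u hu => by
          have : 0 < u := lt_trans hx hu.1
          positivity)]
    apply setLIntegral_congr_fun measurableSet_Ioc
    intro u hu'
    beta_reduce
    have hu0 : 0 < u := lt_trans hx hu'.1
    rw [← MeasureTheory.ofReal_integral_eq_lintegral_ofReal (integrableOn_exp_neg_mul hu0)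
      (Filter.Eventually.of_forall fun s => (Real.exp_pos _).le),
      integral_exp_neg_mul hu0]
  rw [hL, hR] at hswap
  have h1 : 0 ≤ ∫ s in Ioi (0:ℝ), G s :=
    setIntegral_nonneg measurableSet_Ioi fun s hs => frullani_integrand_nonneg hx hs
  have h2 : 0 ≤ Real.log (x + 1) - Real.log x := by
    have := Real.log_le_log hx (by linarith : x ≤ x + 1)
    linarith
  exact (ENNReal.ofReal_eq_ofReal_iff h1 h2).mp hswap

/-! ### The recurrence for `g` -/

lemma g_rec {x : ℝ} (hx : 0 < x) :
    g x - g (x + 1) = 1 / (x + 1) + (1 / x - 1 / (x + 1)) / 2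
      - (Real.log (x + 1) - Real.log x) := by
  have hx1 : (0:ℝ) < x + 1 := by linarith
  have hsub : g x - g (x + 1)
      = ∫ s in Ioi (0:ℝ), (Real.exp (-(x * s)) - Real.exp (-((x + 1) * s))) * f s := by
    rw [g, g, ← integral_sub (integrableOn_F hx) (integrableOn_F hx1)]
    congr 1; funext s; ring
  rw [hsub]
  have hptwise : ∀ s ∈ Ioi (0:ℝ),
      (Real.exp (-(x * s)) - Real.exp (-((x + 1) * s))) * f s
      = Real.exp (-((x + 1) * s))
        + (Real.exp (-(x * s)) - Real.exp (-((x + 1) * s))) / 2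
        - (Real.exp (-(x * s)) - Real.exp (-((x + 1) * s))) / s := by
    intro s hs
    have hs0 : 0 < s := hs
    have hE := exp_sub_one_pos hs0
    have h1 : Real.exp (-((x + 1) * s)) = Real.exp (-(x * s)) * (Real.exp s)⁻¹ := by
      rw [← Real.exp_neg, ← Real.exp_add]; ring_nf
    rw [f, h1]
    have he : Real.exp s ≠ 0 := (Real.exp_pos s).ne'
    field_simp
    ring
  rw [setIntegral_congr_fun measurableSet_Ioi hptwise]
  have hint1 : IntegrableOn (fun s => Real.exp (-((x + 1) * s))) (Ioi (0:ℝ)) :=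
    integrableOn_exp_neg_mul hx1
  have hint2 : IntegrableOn
      (fun s => (Real.exp (-(x * s)) - Real.exp (-((x + 1) * s))) / 2) (Ioi (0:ℝ)) :=
    ((integrableOn_exp_neg_mul hx).sub (integrableOn_exp_neg_mul hx1)).div_const 2
  have hint3 := integrableOn_frullani hx
  have hadd : IntegrableOn (fun s => Real.exp (-((x + 1) * s))
      + (Real.exp (-(x * s)) - Real.exp (-((x + 1) * s))) / 2) (Ioi (0:ℝ)) :=
    hint1.add hint2
  rw [integral_sub hadd hint3, integral_add hint1 hint2, integral_div,
    integral_sub (integrableOn_exp_neg_mul hx) (integrableOn_exp_neg_mul hx1),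
    integral_exp_neg_mul hx, integral_exp_neg_mul hx1, frullani hx]

/-! ### Digamma facts -/

lemma hasDerivAt_logGamma {x : ℝ} (hx : 0 < x) :
    HasDerivAt (Real.log ∘ Real.Gamma) (digamma x) x := by
  have hd : DifferentiableAt ℝ Real.Gamma x :=
    Real.differentiableAt_Gamma
      (fun m => ((neg_nonpos.2 (Nat.cast_nonneg m)).trans_lt hx).ne')
  exact hd.hasDerivAt.log (Real.Gamma_pos_of_pos hx).ne'

lemma logGamma_add_one {x : ℝ} (hx : 0 < x) :
    (Real.log ∘ Real.Gamma) (x + 1) = (Real.log ∘ Real.Gamma) x + Real.log x := by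
  simp only [Function.comp_apply, Real.Gamma_add_one hx.ne',
    Real.log_mul hx.ne' (Real.Gamma_pos_of_pos hx).ne']
  ring

lemma digamma_rec {x : ℝ} (hx : 0 < x) : digamma (x + 1) = digamma x + 1 / x := by
  have h1 : HasDerivAt (fun y => (Real.log ∘ Real.Gamma) (y + 1)) (digamma (x + 1)) x :=
    (hasDerivAt_logGamma (by linarith)).comp_add_const x 1
  have h2 : HasDerivAt (fun y => (Real.log ∘ Real.Gamma) y + Real.log y)
      (digamma x + 1 / x) x := by
    have := (hasDerivAt_logGamma hx).add (Real.hasDerivAt_log hx.ne')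
    rw [one_div]; exact this
  have heq : (fun y => (Real.log ∘ Real.Gamma) (y + 1))
      =ᶠ[nhds x] fun y => (Real.log ∘ Real.Gamma) y + Real.log y := by
    filter_upwards [eventually_gt_nhds hx] with y hy
    exact logGamma_add_one hy
  exact ((h2.congr_of_eventuallyEq heq).unique h1).symm

lemma deriv_logGamma {x : ℝ} (hx : 0 < x) :
    deriv (Real.log ∘ Real.Gamma) x = digamma x := (hasDerivAt_logGamma hx).deriv

lemma phi_le {x : ℝ} (hx : 1 < x) : phi x ≤ 1 / (2 * x) := by
  have hx0 : (0:ℝ) < x := by linarith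
  have h := Real.convexOn_log_Gamma.deriv_le_slope (mem_Ioi.mpr hx0)
    (mem_Ioi.mpr (by linarith : (0:ℝ) < x + 1)) (lt_add_one x)
    (hasDerivAt_logGamma hx0).differentiableAt
  rw [deriv_logGamma hx0, slope_def_field] at h
  have hsl : ((Real.log ∘ Real.Gamma) (x + 1) - (Real.log ∘ Real.Gamma) x) / (x + 1 - x)
      = Real.log x := by
    rw [logGamma_add_one hx0]
    field_simp
    ring
  rw [hsl] at h
  simp only [phi]
  linarith

lemma phi_ge {x : ℝ} (hx : 1 < x) :
    Real.log (x - 1) - Real.log x + 1 / (2 * x) ≤ phi x := by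
  have hx0 : (0:ℝ) < x := by linarith
  have hx1 : (0:ℝ) < x - 1 := by linarith
  have h := Real.convexOn_log_Gamma.slope_le_deriv (mem_Ioi.mpr hx1)
    (mem_Ioi.mpr hx0) (by linarith : x - 1 < x)
    (hasDerivAt_logGamma hx0).differentiableAt
  rw [deriv_logGamma hx0, slope_def_field] at h
  have hsl : ((Real.log ∘ Real.Gamma) x - (Real.log ∘ Real.Gamma) (x - 1)) / (x - (x - 1))
      = Real.log (x - 1) := by
    have h2 := logGamma_add_one hx1
    rw [show x - 1 + 1 = x by ring] at h2
    rw [h2]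
    field_simp
    ring
  rw [hsl] at h
  simp only [phi]
  linarith

/-! ### `phi x = - g x` -/

lemma phi_add_g_step {x : ℝ} (hx : 0 < x) : phi (x + 1) + g (x + 1) = phi x + g x := by
  have h1 := digamma_rec hx
  have h2 := g_rec hx
  have harith : 1 / (2 * (x + 1)) - 1 / (2 * x) + 1 / x
      = 1 / (x + 1) + (1 / x - 1 / (x + 1)) / 2 := by
    field_simp
    ring
  simp only [phi, h1]
  linarith

lemma tendsto_phi {x : ℝ} (hx : 0 < x) :
    Tendsto (fun n : ℕ => phi (x + n)) atTop (nhds 0) := by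
  have hn : Tendsto (fun n : ℕ => x + (n:ℝ)) atTop atTop :=
    tendsto_atTop_add_const_left _ x tendsto_natCast_atTop_atTop
  have hu : Tendsto (fun n : ℕ => 1 / (2 * (x + (n:ℝ)))) atTop (nhds 0) := by
    have h2n : Tendsto (fun n : ℕ => 2 * (x + (n:ℝ))) atTop atTop :=
      hn.const_mul_atTop (by norm_num : (0:ℝ) < 2)
    have h3 := tendsto_inv_atTop_zero.comp h2n
    simpa [one_div, Function.comp_def] using h3
  have hlog : Tendsto (fun n : ℕ => Real.log (x + (n:ℝ) - 1) - Real.log (x + (n:ℝ)))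
      atTop (nhds 0) := by
    have hr : Tendsto (fun n : ℕ => 1 - 1 / (x + (n:ℝ))) atTop (nhds 1) := by
      have : Tendsto (fun n : ℕ => 1 / (x + (n:ℝ))) atTop (nhds 0) := by
        simpa [one_div, Function.comp_def] using (tendsto_inv_atTop_zero.comp hn)
      simpa using tendsto_const_nhds.sub this
    have hcont : Tendsto Real.log (nhds 1) (nhds 0) := by
      simpa using (Real.continuousAt_log one_ne_zero).tendsto
    have hcomp := hcont.comp hr
    apply hcomp.congr'
    filter_upwards [eventually_ge_atTop 1] with n hn1
    have hxn : 1 < x + (n:ℝ) := by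
      have : (1:ℝ) ≤ (n:ℝ) := by exact_mod_cast hn1
      linarith
    have hxn0 : (0:ℝ) < x + (n:ℝ) := by linarith
    have hxn1 : (0:ℝ) < x + (n:ℝ) - 1 := by linarith
    simp only [Function.comp_apply]
    rw [show 1 - 1 / (x + (n:ℝ)) = (x + (n:ℝ) - 1) / (x + (n:ℝ)) by field_simp,
      Real.log_div hxn1.ne' hxn0.ne']
  have hl : Tendsto (fun n : ℕ => Real.log (x + (n:ℝ) - 1) - Real.log (x + (n:ℝ))
      + 1 / (2 * (x + (n:ℝ)))) atTop (nhds 0) := by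
    simpa using hlog.add hu
  apply tendsto_of_tendsto_of_tendsto_of_le_of_le' hl hu
  · filter_upwards [eventually_ge_atTop 1] with n hn1
    have hxn : 1 < x + (n:ℝ) := by
      have : (1:ℝ) ≤ (n:ℝ) := by exact_mod_cast hn1
      linarith
    exact phi_ge hxn
  · filter_upwards [eventually_ge_atTop 1] with n hn1
    have hxn : 1 < x + (n:ℝ) := by
      have : (1:ℝ) ≤ (n:ℝ) := by exact_mod_cast hn1
      linarith
    exact phi_le hxn

lemma tendsto_g {x : ℝ} (hx : 0 < x) :
    Tendsto (fun n : ℕ => g (x + n)) atTop (nhds 0) := by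
  have hn : Tendsto (fun n : ℕ => x + (n:ℝ)) atTop atTop :=
    tendsto_atTop_add_const_left _ x tendsto_natCast_atTop_atTop
  have hu : Tendsto (fun n : ℕ => 1 / (x + (n:ℝ))) atTop (nhds 0) := by
    simpa [one_div, Function.comp_def] using (tendsto_inv_atTop_zero.comp hn)
  apply tendsto_of_tendsto_of_tendsto_of_le_of_le' tendsto_const_nhds hu
  · filter_upwards with n
    exact g_nonneg
  · filter_upwards [eventually_ge_atTop 1] with n hn1
    have hxn : 1 ≤ x + (n:ℝ) := by
      have : (1:ℝ) ≤ (n:ℝ) := by exact_mod_cast hn1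
      linarith
    have hxn0 : (0:ℝ) < x + (n:ℝ) := by linarith
    calc g (x + (n:ℝ)) ≤ 1 / (4 * (x + (n:ℝ)) ^ 2) := g_le hxn0
      _ ≤ 1 / (x + (n:ℝ)) := by
          apply one_div_le_one_div_of_le hxn0
          nlinarith

lemma phi_eq_neg_g {x : ℝ} (hx : 0 < x) : phi x = -g x := by
  have hconst : ∀ n : ℕ, phi (x + n) + g (x + n) = phi x + g x := by
    intro n
    induction n with
    | zero => simp
    | succ n ih =>
        have hxn : (0:ℝ) < x + n := by
          have hnn : (0:ℝ) ≤ (n:ℝ) := Nat.cast_nonneg n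
          linarith
        have := phi_add_g_step hxn
        rw [show x + (n:ℝ) + 1 = x + ((n:ℕ) + 1 : ℕ) by push_cast; ring] at this
        rw [this, ih]
  have h0 : Tendsto (fun n : ℕ => phi (x + n) + g (x + n)) atTop (nhds 0) := by
    simpa using (tendsto_phi hx).add (tendsto_g hx)
  have h1 : Tendsto (fun _ : ℕ => phi x + g x) atTop (nhds (phi x + g x)) :=
    tendsto_const_nhds
  have h2 : Tendsto (fun n : ℕ => phi (x + n) + g (x + n)) atTop (nhds (phi x + g x)) := by
    apply h1.congr
    intro n
    exact (hconst n).symm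
  have := tendsto_nhds_unique h2 h0
  linarith

end SumPhiAux

open SumPhiAux Set in
theorem sum_phi_eq_integral (α : ℝ) (hα : 0 < α) :
    Summable (fun n : ℕ => phi ((n + 1) * α)) ∧
    IntegrableOn
      (fun t : ℝ => (1 / (Real.exp (2 * π * t) - 1)) *
        (1 / (Real.exp (2 * π * t / α) - 1) - α / (2 * π * t) + 1 / 2))
      (Set.Ioi (0 : ℝ)) ∧
    ∑' n : ℕ, phi ((n + 1) * α)
      = -(2 * π / α) *
          ∫ t in Set.Ioi (0 : ℝ),
            (1 / (Real.exp (2 * π * t) - 1)) *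
              (1 / (Real.exp (2 * π * t / α) - 1) - α / (2 * π * t) + 1 / 2) := by
  have hpos : ∀ n : ℕ, (0:ℝ) < ((n:ℝ) + 1) * α := fun n =>
    mul_pos (by positivity) hα
  -- the function G on the `s` side
  set G : ℝ → ℝ := fun s => 1 / (Real.exp (α * s) - 1) * f s with hGdef
  have hGcont : ContinuousOn G (Ioi (0:ℝ)) := by
    apply ContinuousOn.mul _ continuousOn_f
    apply continuousOn_const.div
      ((Real.continuous_exp.comp (continuous_const.mul continuous_id)).continuousOn.sub
        continuousOn_const)
    intro s hs
    exact (exp_sub_one_pos (mul_pos hα (mem_Ioi.mp hs))).ne'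
  have hGnonneg : ∀ s ∈ Ioi (0:ℝ), 0 ≤ G s := by
    intro s hs
    have hs0 : 0 < s := hs
    have hE := exp_sub_one_pos (mul_pos hα hs0)
    exact mul_nonneg (one_div_pos.mpr hE).le (f_nonneg hs0)
  have hGbound : ∀ s ∈ Ioi (0:ℝ), G s ≤ 1 / (4 * α) * Real.exp (-(α / 2 * s)) := by
    intro s hs
    have hs0 : 0 < s := hs
    have hαs : (0:ℝ) < α * s := by positivity
    have hE := exp_sub_one_pos hαs
    -- `exp (α s) - 1 ≥ α s · exp (α s / 2)`
    have hsinh : α * s / 2 < Real.sinh (α * s / 2) :=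
      Real.self_lt_sinh_iff.mpr (by positivity)
    have hfact : Real.exp (α * s) - 1
        = Real.exp (α * s / 2) * (2 * Real.sinh (α * s / 2)) := by
      rw [Real.sinh_eq]
      have h1 : Real.exp (α * s / 2) * Real.exp (α * s / 2) = Real.exp (α * s) := by
        rw [← Real.exp_add]; ring_nf
      have h2 : Real.exp (α * s / 2) * Real.exp (-(α * s / 2)) = 1 := by
        rw [← Real.exp_add]; simp
      nlinarith [h1, h2]
    have hkey : α * s * Real.exp (α * s / 2) ≤ Real.exp (α * s) - 1 := by
      rw [hfact]
      have := Real.exp_pos (α * s / 2)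
      nlinarith
    have h1 : 1 / (Real.exp (α * s) - 1) ≤ 1 / (α * s * Real.exp (α * s / 2)) :=
      one_div_le_one_div_of_le (by positivity) hkey
    calc G s ≤ 1 / (Real.exp (α * s) - 1) * (s / 4) :=
          mul_le_mul_of_nonneg_left (f_le hs0) (by positivity)
      _ ≤ 1 / (α * s * Real.exp (α * s / 2)) * (s / 4) :=
          mul_le_mul_of_nonneg_right h1 (by positivity)
      _ = 1 / (4 * α) * Real.exp (-(α / 2 * s)) := by
          rw [Real.exp_neg]
          have := (Real.exp_pos (α * s / 2)).ne'
          field_simp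
  have hGint : IntegrableOn G (Ioi (0:ℝ)) := by
    apply ((integrableOn_exp_neg_mul (by positivity : (0:ℝ) < α / 2)).const_mul
      (1 / (4 * α))).mono' (hGcont.aestronglyMeasurable measurableSet_Ioi)
    rw [ae_restrict_iff' measurableSet_Ioi]
    filter_upwards with s hs
    rw [Real.norm_eq_abs, abs_of_nonneg (hGnonneg s hs)]
    exact hGbound s hs
  -- summability of the `g` values
  have hsum_bound : Summable (fun n : ℕ => 1 / (4 * (((n:ℝ) + 1) * α) ^ 2)) := by
    have h1 : Summable (fun n : ℕ => 1 / ((n:ℝ)) ^ 2) :=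
      summable_one_div_nat_pow.mpr one_lt_two
    have h2 : Summable (fun n : ℕ => 1 / (((n:ℕ) + 1 : ℕ):ℝ) ^ 2) :=
      (_root_.summable_nat_add_iff (f := fun n : ℕ => 1 / ((n:ℝ)) ^ 2) 1).mpr h1
    have h3 : Summable (fun n : ℕ => 1 / (4 * α ^ 2) * (1 / (((n:ℕ) + 1 : ℕ):ℝ) ^ 2)) :=
      h2.mul_left _
    apply h3.congr
    intro n
    push_cast
    field_simp
  have hg_sum : Summable (fun n : ℕ => g (((n:ℝ) + 1) * α)) := by
    apply Summable.of_nonneg_of_le (fun n => g_nonneg) (fun n => g_le (hpos n)) hsum_bound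
  -- each `phi ((n+1)α) = - g ((n+1)α)`
  have hphi_eq : ∀ n : ℕ, phi (((n:ℝ) + 1) * α) = -g (((n:ℝ) + 1) * α) :=
    fun n => phi_eq_neg_g (hpos n)
  have hsummable : Summable (fun n : ℕ => phi (((n:ℝ) + 1) * α)) := by
    apply (hg_sum.neg).congr
    intro n
    exact (hphi_eq n).symm
  -- swap sum and integral
  have hF_int : ∀ n : ℕ, Integrable
      (fun s => Real.exp (-((((n:ℝ) + 1) * α) * s)) * f s) (volume.restrict (Ioi (0:ℝ))) :=
    fun n => integrableOn_F (hpos n)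
  have hnorm_eq : ∀ n : ℕ, (∫ s in Ioi (0:ℝ), ‖Real.exp (-((((n:ℝ) + 1) * α) * s)) * f s‖)
      = g (((n:ℝ) + 1) * α) := by
    intro n
    apply setIntegral_congr_fun measurableSet_Ioi
    intro s hs
    exact Real.norm_of_nonneg (integrand_nonneg hs)
  have hsum_norm : Summable (fun n : ℕ =>
      ∫ s in Ioi (0:ℝ), ‖Real.exp (-((((n:ℝ) + 1) * α) * s)) * f s‖) := by
    apply hg_sum.congr
    intro n
    exact (hnorm_eq n).symm
  have hswap := MeasureTheory.integral_tsum_of_summable_integral_norm hF_int hsum_norm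
  -- pointwise sum of the geometric series
  have hptsum : ∀ s ∈ Ioi (0:ℝ),
      (∑' n : ℕ, Real.exp (-((((n:ℝ) + 1) * α) * s)) * f s) = G s := by
    intro s hs
    have hs0 : 0 < s := hs
    have hαs : (0:ℝ) < α * s := by positivity
    set r : ℝ := Real.exp (-(α * s)) with hr
    have hr0 : 0 ≤ r := (Real.exp_pos _).le
    have hr1 : r < 1 := by
      rw [hr, Real.exp_lt_one_iff]
      linarith
    have hterm : ∀ n : ℕ, Real.exp (-((((n:ℝ) + 1) * α) * s)) = r ^ n * r := by
      intro n
      rw [hr, ← Real.exp_nat_mul, ← Real.exp_add]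
      congr 1
      push_cast
      ring
    calc (∑' n : ℕ, Real.exp (-((((n:ℝ) + 1) * α) * s)) * f s)
        = ∑' n : ℕ, (r ^ n * r) * f s := by
          congr 1; funext n; rw [hterm n]
      _ = (∑' n : ℕ, r ^ n) * (r * f s) := by
          rw [← tsum_mul_right]
          congr 1; funext n; ring
      _ = (1 - r)⁻¹ * (r * f s) := by rw [tsum_geometric_of_lt_one hr0 hr1]
      _ = G s := by
          rw [hGdef]
          have hE := exp_sub_one_pos hαs
          have h1 : (1:ℝ) - r = (Real.exp (α * s) - 1) / Real.exp (α * s) := by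
            rw [hr, Real.exp_neg]
            field_simp
          rw [h1, hr, Real.exp_neg]
          have := (Real.exp_pos (α * s)).ne'
          field_simp
  -- the total sum identity on the `s` side
  have htsum_g : (∑' n : ℕ, g (((n:ℝ) + 1) * α)) = ∫ s in Ioi (0:ℝ), G s := by
    rw [← setIntegral_congr_fun measurableSet_Ioi hptsum, ← hswap]
    exact tsum_congr fun n => rfl
  -- change of variables `s = (2π/α) t`
  have hc : (0:ℝ) < 2 * π / α := by positivity
  have hsub := MeasureTheory.integral_comp_mul_left_Ioi G 0 hc
  simp only [mul_zero] at hsub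
  -- the integrand in the statement agrees with `G ((2π/α) t)` on `Ioi 0`
  have hintegrand : ∀ t ∈ Ioi (0:ℝ),
      G (2 * π / α * t)
        = (1 / (Real.exp (2 * π * t) - 1)) *
            (1 / (Real.exp (2 * π * t / α) - 1) - α / (2 * π * t) + 1 / 2) := by
    intro t ht
    have ht0 : 0 < t := ht
    have hπ := Real.pi_pos
    simp only [hGdef, f]
    rw [show α * (2 * π / α * t) = 2 * π * t by field_simp,
      show 2 * π / α * t = 2 * π * t / α by ring, one_div_div]
  -- integrability of the statement's integrand
  have h1 : IntegrableOn (fun t => G (2 * π / α * t)) (Ioi (0:ℝ)) := by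
    have := (integrableOn_Ioi_comp_mul_left_iff G 0 hc).mpr (by simpa using hGint)
    simpa using this
  have hint_t : IntegrableOn
      (fun t : ℝ => (1 / (Real.exp (2 * π * t) - 1)) *
        (1 / (Real.exp (2 * π * t / α) - 1) - α / (2 * π * t) + 1 / 2))
      (Set.Ioi (0 : ℝ)) := h1.congr_fun hintegrand measurableSet_Ioi
  -- value of the integral after change of variables
  have heq_int : (∫ t in Ioi (0:ℝ), G (2 * π / α * t))
      = ∫ t in Ioi (0:ℝ), (1 / (Real.exp (2 * π * t) - 1)) *
          (1 / (Real.exp (2 * π * t / α) - 1) - α / (2 * π * t) + 1 / 2) :=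
    setIntegral_congr_fun measurableSet_Ioi hintegrand
  have hval : (∫ s in Ioi (0:ℝ), G s)
      = (2 * π / α) * ∫ t in Ioi (0:ℝ), (1 / (Real.exp (2 * π * t) - 1)) *
          (1 / (Real.exp (2 * π * t / α) - 1) - α / (2 * π * t) + 1 / 2) := by
    rw [← heq_int, hsub, smul_eq_mul]
    field_simp
  refine ⟨hsummable, hint_t, ?_⟩
  calc (∑' n : ℕ, phi (((n:ℝ) + 1) * α))
      = ∑' n : ℕ, -g (((n:ℝ) + 1) * α) := tsum_congr hphi_eq
    _ = -∑' n : ℕ, g (((n:ℝ) + 1) * α) := by rw [tsum_neg]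
    _ = -((2 * π / α) * ∫ t in Ioi (0:ℝ), (1 / (Real.exp (2 * π * t) - 1)) *
          (1 / (Real.exp (2 * π * t / α) - 1) - α / (2 * π * t) + 1 / 2)) := by
        rw [htsum_g, hval]
    _ = -(2 * π / α) * ∫ t in Ioi (0:ℝ), (1 / (Real.exp (2 * π * t) - 1)) *
          (1 / (Real.exp (2 * π * t / α) - 1) - α / (2 * π * t) + 1 / 2) := by ring
end

section
/- For every real α > 0, γ - log(2πα) = ∫_0^∞ ( 2π/(e^{2πt} - 1) - e^{-t/α}/t ) dt, where γ is Euler's constant. -/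
open Real MeasureTheory Filter

open Set

set_option maxHeartbeats 1000000

lemma integral_exp_neg_log : ∫ t in Ioi (0:ℝ), Real.exp (-t) * Real.log t
    = -Real.eulerMascheroniConstant := by
  have h1 : HasDerivAt Complex.GammaIntegral
      (∫ t : ℝ in Ioi 0, (t:ℂ) ^ ((1:ℂ) - 1) * (Real.log t * Real.exp (-t))) 1 :=
    Complex.hasDerivAt_GammaIntegral (by norm_num)
  have h2 : (∫ t : ℝ in Ioi 0, (t:ℂ) ^ ((1:ℂ) - 1) * (Real.log t * Real.exp (-t)))
      = ((∫ t in Ioi (0:ℝ), Real.exp (-t) * Real.log t : ℝ) : ℂ) := by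
    have : (∫ t in Ioi (0:ℝ), ((Real.exp (-t) * Real.log t : ℝ) : ℂ))
        = ((∫ t in Ioi (0:ℝ), Real.exp (-t) * Real.log t : ℝ) : ℂ) := integral_ofReal
    rw [← this]
    refine setIntegral_congr_fun measurableSet_Ioi (fun t ht => ?_)
    rw [sub_self, Complex.cpow_zero, one_mul]
    push_cast
    ring
  rw [h2] at h1
  have h3 : Complex.Gamma =ᶠ[nhds (1:ℂ)] Complex.GammaIntegral := by
    filter_upwards [(isOpen_lt continuous_const Complex.continuous_re).mem_nhds
      (by norm_num : (0:ℂ).re < (1:ℂ).re)] with s hs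
    exact Complex.Gamma_eq_integral hs
  have h4 : HasDerivAt Complex.Gamma
      ((∫ t in Ioi (0:ℝ), Real.exp (-t) * Real.log t : ℝ) : ℂ) 1 :=
    h1.congr_of_eventuallyEq h3
  have h5 : HasDerivAt (fun x : ℝ => (Complex.Gamma (x:ℂ)).re)
      (((∫ t in Ioi (0:ℝ), Real.exp (-t) * Real.log t : ℝ) : ℂ)).re 1 := by
    exact HasDerivAt.real_of_complex (by exact_mod_cast h4)
  have h6 : (fun x : ℝ => (Complex.Gamma (x:ℂ)).re) = Real.Gamma := by
    funext x; rw [Complex.Gamma_ofReal, Complex.ofReal_re]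
  rw [h6, Complex.ofReal_re] at h5
  have := Real.hasDerivAt_Gamma_one.unique h5
  linarith

-- elementary: e^u - 1 - u ≤ u^2/2 * e^u for u ≥ 0
lemma exp_quad_bound {u : ℝ} (hu : 0 ≤ u) : Real.exp u - 1 - u ≤ u^2/2 * Real.exp u := by
  have key : ∀ s ∈ Icc (0:ℝ) u, Real.exp s - 1 ≤ s * Real.exp u := by
    intro s hs
    have h1 : Real.exp s * (1 - s) ≤ 1 := by
      have := Real.add_one_le_exp (-s)
      have h0 : Real.exp s * Real.exp (-s) = 1 := by
        rw [← Real.exp_add]; simp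
      nlinarith [Real.exp_pos s]
    have h2 : Real.exp s ≤ Real.exp u := Real.exp_le_exp.2 hs.2
    nlinarith [hs.1, Real.exp_pos s]
  have h3 : (∫ s in (0:ℝ)..u, (Real.exp s - 1)) ≤ ∫ s in (0:ℝ)..u, s * Real.exp u := by
    apply intervalIntegral.integral_mono_on hu
    · exact (Real.continuous_exp.sub continuous_const).intervalIntegrable _ _
    · exact (continuous_id.mul continuous_const).intervalIntegrable _ _
    · exact key
  have h4 : (∫ s in (0:ℝ)..u, (Real.exp s - 1)) = Real.exp u - 1 - u := by
    rw [intervalIntegral.integral_sub ((Real.continuous_exp).intervalIntegrable _ _)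
      (intervalIntegrable_const)]
    simp [integral_exp]
  have h5 : (∫ s in (0:ℝ)..u, s * Real.exp u) = u^2/2 * Real.exp u := by
    rw [intervalIntegral.integral_mul_const, integral_id]
    ring
  linarith [h3, h4.symm, h5]

-- 0 ≤ 1/u - 1/(e^u-1) ≤ e^u/2 for u > 0
lemma inv_sub_inv_exp_bound {u : ℝ} (hu : 0 < u) :
    0 ≤ 1/u - 1/(Real.exp u - 1) ∧ 1/u - 1/(Real.exp u - 1) ≤ Real.exp u / 2 := by
  have h1 : u ≤ Real.exp u - 1 := by linarith [Real.add_one_le_exp u]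
  have he : 0 < Real.exp u - 1 := lt_of_lt_of_le hu h1
  constructor
  · have := one_div_le_one_div_of_le hu h1
    linarith
  · have heq : 1/u - 1/(Real.exp u - 1) = (Real.exp u - 1 - u)/(u * (Real.exp u - 1)) := by
      field_simp
    rw [heq, div_le_iff₀ (by positivity)]
    have h2 := exp_quad_bound hu.le
    nlinarith [Real.exp_pos u, sq_nonneg u]

-- log integrable near 0
lemma integrableOn_neg_log_Ioc : IntegrableOn (fun x : ℝ => -Real.log x) (Ioc (0:ℝ) 1) := by
  have hcont : ContinuousOn (fun x : ℝ => x - x * Real.log x) (Icc (0:ℝ) 1) :=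
    (continuous_id.sub Real.continuous_mul_log).continuousOn
  have hderiv : ∀ x ∈ Ioo (0:ℝ) 1,
      HasDerivAt (fun x : ℝ => x - x * Real.log x) (-Real.log x) x := by
    intro x hx
    have h := (hasDerivAt_id x).sub (Real.hasDerivAt_mul_log (ne_of_gt hx.1))
    exact h.congr_deriv (by ring)
  exact intervalIntegral.integrableOn_deriv_of_nonneg hcont hderiv
    (fun x hx => neg_nonneg.2 (Real.log_nonpos hx.1.le hx.2.le))

lemma integrableOn_exp_neg_div_log {α : ℝ} (hα : 0 < α) :
    IntegrableOn (fun t : ℝ => Real.exp (-(t/α)) * Real.log t) (Ioi (0:ℝ)) := by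
  have hmeas : ∀ s : Set ℝ, s ⊆ Ioi 0 → MeasurableSet s →
      AEStronglyMeasurable (fun t : ℝ => Real.exp (-(t/α)) * Real.log t) (volume.restrict s) := by
    intro s hs hms
    exact ((Real.continuous_exp.comp ((continuous_id.div_const α).neg)).aestronglyMeasurable).mul
      Real.measurable_log.aestronglyMeasurable
  have h1 : IntegrableOn (fun t : ℝ => Real.exp (-(t/α)) * Real.log t) (Ioc (0:ℝ) 1) := by
    refine integrableOn_neg_log_Ioc.mono' (hmeas (Ioc 0 1) (fun x hx => hx.1) measurableSet_Ioc) ?_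
    rw [ae_restrict_iff' measurableSet_Ioc]
    filter_upwards with t ht
    have h1 : Real.exp (-(t/α)) ≤ 1 := Real.exp_le_one_iff.2 (neg_nonpos.2 (div_nonneg ht.1.le hα.le))
    have h2 : Real.log t ≤ 0 := Real.log_nonpos ht.1.le ht.2
    rw [norm_mul, Real.norm_eq_abs, Real.norm_eq_abs, abs_of_nonpos h2]
    calc |Real.exp (-(t/α))| * (-Real.log t) ≤ 1 * (-Real.log t) := by
          apply mul_le_mul_of_nonneg_right _ (by linarith)
          rw [abs_of_nonneg (Real.exp_pos _).le]; exact h1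
      _ = -Real.log t := one_mul _
  have h2 : IntegrableOn (fun t : ℝ => Real.exp (-(t/α)) * Real.log t) (Ioi (1:ℝ)) := by
    have hint : IntegrableOn (fun t : ℝ => (2*α) * Real.exp (-((2*α)⁻¹*t))) (Ioi (1:ℝ)) := by
      have := (exp_neg_integrableOn_Ioi 1 (show (0:ℝ) < (2*α)⁻¹ by positivity)).const_mul (2*α)
      exact IntegrableOn.congr_fun this (fun t ht => by rw [neg_mul]) measurableSet_Ioi
    refine hint.mono' (hmeas (Ioi 1) (fun x hx => show (0:ℝ) < x from lt_trans one_pos hx) measurableSet_Ioi) ?_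
    rw [ae_restrict_iff' measurableSet_Ioi]
    filter_upwards with t ht
    have ht1 : (1:ℝ) < t := ht
    have hlog : 0 ≤ Real.log t := Real.log_nonneg ht1.le
    have hlt : Real.log t ≤ t := (Real.log_le_sub_one_of_pos (by linarith)).trans (by linarith)
    rw [norm_mul, Real.norm_eq_abs, Real.norm_eq_abs, abs_of_nonneg (Real.exp_pos _).le,
      abs_of_nonneg hlog]
    -- exp(-(t/α)) * log t ≤ exp(-(t/α)) * t ≤ 2α exp(-t/(2α))
    have key : t * Real.exp (-(t/α)) ≤ (2*α) * Real.exp (-((2*α)⁻¹*t)) := by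
      have hsplit : Real.exp (-(t/α)) = Real.exp (-((2*α)⁻¹*t)) * Real.exp (-((2*α)⁻¹*t)) := by
        rw [← Real.exp_add]; congr 1; field_simp; ring
      have hbound : t * Real.exp (-((2*α)⁻¹*t)) ≤ 2*α := by
        have h := Real.add_one_le_exp ((2*α)⁻¹*t)
        have he : Real.exp (-((2*α)⁻¹*t)) = (Real.exp ((2*α)⁻¹*t))⁻¹ := by
          rw [← Real.exp_neg]
        rw [he]
        rw [mul_inv_le_iff₀' (Real.exp_pos _)]
        have : (2*α)⁻¹*t ≤ Real.exp ((2*α)⁻¹*t) := by linarith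
        calc t = (2*α) * ((2*α)⁻¹*t) := by field_simp
          _ ≤ (2*α) * Real.exp ((2*α)⁻¹*t) := by
              apply mul_le_mul_of_nonneg_left this (by positivity)
          _ = Real.exp ((2*α)⁻¹*t) * (2*α) := by ring
      calc t * Real.exp (-(t/α)) = (t * Real.exp (-((2*α)⁻¹*t))) * Real.exp (-((2*α)⁻¹*t)) := by
            rw [hsplit]; ring
        _ ≤ (2*α) * Real.exp (-((2*α)⁻¹*t)) := by
            apply mul_le_mul_of_nonneg_right hbound (Real.exp_pos _).le
    calc Real.exp (-(t/α)) * Real.log t ≤ Real.exp (-(t/α)) * t := by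
          apply mul_le_mul_of_nonneg_left hlt (Real.exp_pos _).le
      _ ≤ (2*α) * Real.exp (-((2*α)⁻¹*t)) := by linarith [key]
  have : Ioi (0:ℝ) = Ioc 0 1 ∪ Ioi 1 := (Ioc_union_Ioi_eq_Ioi zero_le_one).symm
  rw [this]
  exact h1.union h2

-- pointwise bounds
lemma first_term_bound {t : ℝ} (ht : 0 < t) :
    |2*π/(Real.exp (2*π*t) - 1) - 1/t| ≤ π * Real.exp (2*π*t) := by
  have hu : 0 < 2*π*t := by positivity
  obtain ⟨h1, h2⟩ := inv_sub_inv_exp_bound hu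
  have key : 2*π/(Real.exp (2*π*t) - 1) - 1/t = -((2*π) * (1/(2*π*t) - 1/(Real.exp (2*π*t) - 1))) := by
    have : (1:ℝ)/t = 2*π*(1/(2*π*t)) := by
      field_simp
    rw [this]; ring
  rw [key, abs_neg, abs_of_nonneg (by positivity)]
  calc 2*π * (1/(2*π*t) - 1/(Real.exp (2*π*t) - 1)) ≤ 2*π * (Real.exp (2*π*t)/2) := by
        apply mul_le_mul_of_nonneg_left h2 (by positivity)
    _ = π * Real.exp (2*π*t) := by ring

lemma second_term_bound {α t : ℝ} (hα : 0 < α) (ht : 0 < t) :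
    0 ≤ 1/t - Real.exp (-(t/α))/t ∧ 1/t - Real.exp (-(t/α))/t ≤ 1/α := by
  have hx : 0 ≤ t/α := by positivity
  have h1 : Real.exp (-(t/α)) ≤ 1 := Real.exp_le_one_iff.2 (neg_nonpos.2 hx)
  have h2 : 1 - t/α ≤ Real.exp (-(t/α)) := by
    have := Real.add_one_le_exp (-(t/α)); linarith
  constructor
  · have h3 : Real.exp (-(t/α))/t ≤ 1/t := by gcongr
    linarith
  · have heq : 1/t - Real.exp (-(t/α))/t = (1 - Real.exp (-(t/α)))/t := by ring
    rw [heq]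
    have h3 : (1 - Real.exp (-(t/α)))/t ≤ (t/α)/t := by gcongr; linarith
    have h4 : (t/α)/t = 1/α := by
      field_simp
    linarith

lemma f_bound_Ioc {α t : ℝ} (hα : 0 < α) (ht : 0 < t) (ht1 : t ≤ 1) :
    |2*π/(Real.exp (2*π*t) - 1) - Real.exp (-(t/α))/t| ≤ π * Real.exp (2*π) + 1/α := by
  obtain ⟨h1, h2⟩ := second_term_bound hα ht
  have h3 := first_term_bound ht
  have h4 : Real.exp (2*π*t) ≤ Real.exp (2*π) := by
    apply Real.exp_le_exp.2; nlinarith [pi_pos]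
  have h5 : |2*π/(Real.exp (2*π*t) - 1) - Real.exp (-(t/α))/t| ≤
      |2*π/(Real.exp (2*π*t) - 1) - 1/t| + |1/t - Real.exp (-(t/α))/t| := by
    have := abs_sub_abs_le_abs_sub (2*π/(Real.exp (2*π*t) - 1) - 1/t) (Real.exp (-(t/α))/t - 1/t)
    calc |2*π/(Real.exp (2*π*t) - 1) - Real.exp (-(t/α))/t|
        = |(2*π/(Real.exp (2*π*t) - 1) - 1/t) + (1/t - Real.exp (-(t/α))/t)| :=
          congrArg abs (by ring)
      _ ≤ _ := abs_add_le _ _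
  have h6 : |1/t - Real.exp (-(t/α))/t| ≤ 1/α := by
    rw [abs_of_nonneg h1]; exact h2
  have h7 : π * Real.exp (2*π*t) ≤ π * Real.exp (2*π) :=
    mul_le_mul_of_nonneg_left h4 pi_pos.le
  linarith

lemma exp_pos_sub_one {u : ℝ} (hu : 0 < u) : 0 < Real.exp u - 1 := by
  have : (1:ℝ) < Real.exp u := Real.one_lt_exp_iff.2 hu
  linarith

lemma one_sub_exp_neg_pos {u : ℝ} (hu : 0 < u) : 0 < 1 - Real.exp (-u) := by
  have : Real.exp (-u) < 1 := Real.exp_lt_one_iff.2 (by linarith)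
  linarith

lemma A_bound {ε t : ℝ} (hε : 0 < ε) (ht : ε ≤ t) :
    2*π/(Real.exp (2*π*t) - 1) ≤ (2*π/(1 - Real.exp (-(2*π*ε)))) * Real.exp (-(2*π*t)) := by
  have htpos : 0 < t := lt_of_lt_of_le hε ht
  have hden : 0 < 1 - Real.exp (-(2*π*ε)) := one_sub_exp_neg_pos (by positivity)
  have h1 : 0 < Real.exp (2*π*t) - 1 := exp_pos_sub_one (by positivity)
  -- key : (1 - exp(-2πε)) * exp(2πt) ≤ exp(2πt) - 1
  have key : (1 - Real.exp (-(2*π*ε))) * Real.exp (2*π*t) ≤ Real.exp (2*π*t) - 1 := by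
    have h2 : (1:ℝ) ≤ Real.exp (-(2*π*ε)) * Real.exp (2*π*t) := by
      rw [← Real.exp_add]
      refine Real.one_le_exp ?_
      have := mul_le_mul_of_nonneg_left ht (show (0:ℝ) ≤ 2*π by positivity)
      linarith
    nlinarith
  rw [div_le_iff₀ h1]
  have hrw : (2*π/(1 - Real.exp (-(2*π*ε)))) * Real.exp (-(2*π*t)) * (Real.exp (2*π*t) - 1)
      = (2*π) * (Real.exp (-(2*π*t)) * (Real.exp (2*π*t) - 1)) / (1 - Real.exp (-(2*π*ε))) := by
    ring
  rw [hrw, le_div_iff₀ hden]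
  have hee : Real.exp (-(2*π*t)) * Real.exp (2*π*t) = 1 := by rw [← Real.exp_add]; simp
  have hexp_le : Real.exp (-(2*π*t)) ≤ Real.exp (-(2*π*ε)) :=
    Real.exp_le_exp.2 (by nlinarith [pi_pos])
  nlinarith [Real.exp_pos (-(2*π*t)), pi_pos]

lemma A_int {ε : ℝ} (hε : 0 < ε) :
    IntegrableOn (fun t : ℝ => 2*π/(Real.exp (2*π*t) - 1)) (Ioi ε) := by
  have hint : IntegrableOn (fun t : ℝ => (2*π/(1 - Real.exp (-(2*π*ε)))) * Real.exp (-(2*π*t)))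
      (Ioi ε) := by
    have := (exp_neg_integrableOn_Ioi ε (show (0:ℝ) < 2*π by positivity)).const_mul
      (2*π/(1 - Real.exp (-(2*π*ε))))
    exact IntegrableOn.congr_fun this (fun t ht => by rw [neg_mul]) measurableSet_Ioi
  refine hint.mono' (Measurable.aestronglyMeasurable (by fun_prop)) ?_
  rw [ae_restrict_iff' measurableSet_Ioi]
  filter_upwards with t ht
  have htpos : 0 < t := lt_trans hε ht
  have h1 : 0 < Real.exp (2*π*t) - 1 := exp_pos_sub_one (by positivity)
  rw [Real.norm_eq_abs, abs_of_nonneg (by positivity)]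
  exact A_bound hε (le_of_lt ht)

lemma FTC_A {ε : ℝ} (hε : 0 < ε) :
    ∫ t in Ioi ε, 2*π/(Real.exp (2*π*t) - 1) = -Real.log (1 - Real.exp (-(2*π*ε))) := by
  have hderiv : ∀ t ∈ Ioi ε, HasDerivAt (fun t : ℝ => Real.log (1 - Real.exp (-(2*π*t))))
      (2*π/(Real.exp (2*π*t) - 1)) t := by
    intro t ht
    have htpos : 0 < t := lt_trans hε ht
    have hpos : 0 < 1 - Real.exp (-(2*π*t)) := one_sub_exp_neg_pos (by positivity)
    have h1 : 0 < Real.exp (2*π*t) - 1 := exp_pos_sub_one (by positivity)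
    have hinner : HasDerivAt (fun t : ℝ => 1 - Real.exp (-(2*π*t))) (2*π*Real.exp (-(2*π*t))) t := by
      have ha : HasDerivAt (fun t : ℝ => -(2*π*t)) (-(2*π)) t := by
        exact (((hasDerivAt_id t).const_mul (2*π)).neg).congr_deriv (by simp)
      have h2 := (Real.hasDerivAt_exp (-(2*π*t))).comp t ha
      have h3 := (h2.neg).const_add 1
      exact h3.congr_deriv (by ring)
    have hlog := hinner.log (ne_of_gt hpos)
    convert hlog using 1
    have hee : Real.exp (-(2*π*t)) * Real.exp (2*π*t) = 1 := by rw [← Real.exp_add]; simp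
    rw [div_eq_div_iff (ne_of_gt h1) (ne_of_gt hpos)]
    nlinarith [pi_pos]
  have htend : Tendsto (fun t : ℝ => Real.log (1 - Real.exp (-(2*π*t)))) atTop (nhds 0) := by
    have h2 : Tendsto (fun t : ℝ => Real.exp (-(2*π*t))) atTop (nhds 0) := by
      have := Real.tendsto_exp_neg_atTop_nhds_zero.comp
        (tendsto_id.const_mul_atTop (show (0:ℝ) < 2*π by positivity))
      exact this.congr (fun t => by simp [Function.comp, neg_mul])
    have h1 : Tendsto (fun t : ℝ => 1 - Real.exp (-(2*π*t))) atTop (nhds 1) := by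
      simpa using (tendsto_const_nhds.sub h2)
    have := (Real.continuousAt_log (by norm_num : (1:ℝ) ≠ 0)).tendsto.comp h1
    simpa [Function.comp_def] using this
  have hcont : ContinuousWithinAt (fun t : ℝ => Real.log (1 - Real.exp (-(2*π*t)))) (Ici ε) ε := by
    have hpos : 0 < 1 - Real.exp (-(2*π*ε)) := one_sub_exp_neg_pos (by positivity)
    apply ContinuousAt.continuousWithinAt
    have hin : ContinuousAt (fun t : ℝ => 1 - Real.exp (-(2*π*t))) ε := by fun_prop
    exact (Real.continuousAt_log (ne_of_gt hpos)).tendsto.comp hin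
  have := integral_Ioi_of_hasDerivAt_of_tendsto hcont hderiv (A_int hε) htend
  rw [this]; ring

lemma B_int {α ε : ℝ} (hα : 0 < α) (hε : 0 < ε) :
    IntegrableOn (fun t : ℝ => Real.exp (-(t/α))/t) (Ioi ε) := by
  have hint : IntegrableOn (fun t : ℝ => ε⁻¹ * Real.exp (-(α⁻¹*t))) (Ioi ε) := by
    have := (exp_neg_integrableOn_Ioi ε (inv_pos.2 hα)).const_mul ε⁻¹
    exact IntegrableOn.congr_fun this (fun t ht => by rw [neg_mul]) measurableSet_Ioi
  refine hint.mono' (Measurable.aestronglyMeasurable (by fun_prop)) ?_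
  rw [ae_restrict_iff' measurableSet_Ioi]
  filter_upwards with t ht
  have htpos : 0 < t := lt_trans hε ht
  rw [Real.norm_eq_abs, abs_of_nonneg (by positivity)]
  have h1 : Real.exp (-(t/α))/t ≤ Real.exp (-(t/α))/ε := by gcongr; exact le_of_lt ht
  have h2 : Real.exp (-(t/α))/ε = ε⁻¹ * Real.exp (-(α⁻¹*t)) := by
    rw [inv_mul_eq_div α t]; ring
  linarith

lemma tendsto_H {α : ℝ} (hα : 0 < α) :
    Tendsto (fun t : ℝ => Real.exp (-(t/α)) * Real.log t) atTop (nhds 0) := by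
  have h1 : Tendsto (fun x : ℝ => x * Real.exp (-x)) atTop (nhds 0) := by
    simpa using tendsto_pow_mul_exp_neg_atTop_nhds_zero 1
  have h2 : Tendsto (fun t : ℝ => α⁻¹*t) atTop atTop :=
    tendsto_id.const_mul_atTop (inv_pos.2 hα)
  have h3 := (h1.comp h2).const_mul α
  rw [mul_zero] at h3
  apply squeeze_zero_norm' _ h3
  filter_upwards [eventually_ge_atTop (1:ℝ)] with t ht
  have htpos : (0:ℝ) < t := lt_of_lt_of_le one_pos ht
  have hlog0 : 0 ≤ Real.log t := Real.log_nonneg ht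
  have hlogt : Real.log t ≤ t := (Real.log_le_sub_one_of_pos htpos).trans (by linarith)
  rw [Real.norm_eq_abs, abs_mul, abs_of_nonneg (Real.exp_pos _).le, abs_of_nonneg hlog0]
  have : Real.exp (-(t/α)) * Real.log t ≤ Real.exp (-(t/α)) * t :=
    mul_le_mul_of_nonneg_left hlogt (Real.exp_pos _).le
  calc Real.exp (-(t/α)) * Real.log t ≤ Real.exp (-(t/α)) * t := this
    _ = α * ((fun x : ℝ => x * Real.exp (-x)) ∘ (fun t : ℝ => α⁻¹*t)) t := by
      simp only [Function.comp]
      rw [inv_mul_eq_div α t]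
      field_simp
    _ = _ := rfl

lemma hasDerivAt_H {α t : ℝ} (hα : 0 < α) (ht : 0 < t) :
    HasDerivAt (fun t : ℝ => Real.exp (-(t/α)) * Real.log t)
      (Real.exp (-(t/α))/t - α⁻¹ * (Real.exp (-(t/α)) * Real.log t)) t := by
  have hexp : HasDerivAt (fun t : ℝ => Real.exp (-(t/α))) (Real.exp (-(t/α)) * (-α⁻¹)) t := by
    have ha : HasDerivAt (fun t : ℝ => -(t/α)) (-α⁻¹) t := by
      exact (((hasDerivAt_id t).div_const α).neg).congr_deriv (by simp)
    exact (Real.hasDerivAt_exp (-(t/α))).comp t ha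
  have hlog := Real.hasDerivAt_log (ne_of_gt ht)
  have := hexp.mul hlog
  exact this.congr_deriv (by ring)

lemma intB {α ε : ℝ} (hα : 0 < α) (hε : 0 < ε) :
    ∫ t in Ioi ε, Real.exp (-(t/α))/t
      = -(Real.exp (-(ε/α)) * Real.log ε)
        + α⁻¹ * ∫ t in Ioi ε, Real.exp (-(t/α)) * Real.log t := by
  have hgi : IntegrableOn (fun t : ℝ => Real.exp (-(t/α)) * Real.log t) (Ioi ε) :=
    (integrableOn_exp_neg_div_log hα).mono_set (Ioi_subset_Ioi hε.le)
  have hgi' : IntegrableOn (fun t : ℝ => α⁻¹ * (Real.exp (-(t/α)) * Real.log t)) (Ioi ε) :=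
    hgi.const_mul _
  have hFTC : ∫ t in Ioi ε,
      (Real.exp (-(t/α))/t - α⁻¹ * (Real.exp (-(t/α)) * Real.log t))
      = 0 - Real.exp (-(ε/α)) * Real.log ε := by
    apply integral_Ioi_of_hasDerivAt_of_tendsto
    · apply ContinuousAt.continuousWithinAt
      have h1 : ContinuousAt (fun t : ℝ => Real.exp (-(t/α))) ε := by fun_prop
      have h2 : ContinuousAt Real.log ε := Real.continuousAt_log (ne_of_gt hε)
      exact h1.mul h2
    · exact fun t ht => hasDerivAt_H hα (lt_trans hε ht)
    · exact (B_int hα hε).sub hgi'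
    · exact tendsto_H hα
  rw [integral_sub (B_int hα hε) hgi', MeasureTheory.integral_const_mul] at hFTC
  linarith [hFTC]

lemma change_var {α : ℝ} (hα : 0 < α) :
    ∫ t in Ioi (0:ℝ), Real.exp (-(t/α)) * Real.log t
      = α * (Real.log α - Real.eulerMascheroniConstant) := by
  set G : ℝ → ℝ := fun y => Real.exp (-y) * Real.log (α*y) with hG
  have h1 : (fun x : ℝ => G (α⁻¹*x)) = fun t : ℝ => Real.exp (-(t/α)) * Real.log t := by
    funext x
    simp only [hG]
    rw [mul_inv_cancel_left₀ (ne_of_gt hα), inv_mul_eq_div]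
  have h2 := integral_comp_mul_left_Ioi G 0 (inv_pos.2 hα)
  rw [h1] at h2
  rw [h2]
  simp only [mul_zero, inv_inv, smul_eq_mul]
  congr 1
  have h3 : ∫ y in Ioi (0:ℝ), G y
      = ∫ y in Ioi (0:ℝ), (Real.exp (-y) * Real.log α + Real.exp (-y) * Real.log y) := by
    refine setIntegral_congr_fun measurableSet_Ioi (fun y hy => ?_)
    simp only [hG]
    rw [Real.log_mul (ne_of_gt hα) (ne_of_gt hy)]
    ring
  have hi1 : IntegrableOn (fun y : ℝ => Real.exp (-y) * Real.log α) (Ioi (0:ℝ)) := by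
    have := (exp_neg_integrableOn_Ioi 0 one_pos).mul_const (Real.log α)
    exact IntegrableOn.congr_fun this (fun t ht => by rw [neg_one_mul]) measurableSet_Ioi
  have hi2 : IntegrableOn (fun y : ℝ => Real.exp (-y) * Real.log y) (Ioi (0:ℝ)) := by
    have := integrableOn_exp_neg_div_log one_pos
    exact IntegrableOn.congr_fun this (fun t ht => by rw [div_one]) measurableSet_Ioi
  rw [h3, integral_add hi1 hi2]
  have h4 : ∫ y in Ioi (0:ℝ), Real.exp (-y) * Real.log α = Real.log α := by
    rw [integral_mul_const, integral_exp_neg_Ioi_zero, one_mul]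
  rw [h4, integral_exp_neg_log]
  ring

lemma tendsto_A_limit :
    Tendsto (fun ε : ℝ => -Real.log (1 - Real.exp (-(2*π*ε))) + Real.log ε)
      (nhdsWithin 0 (Ioi 0)) (nhds (-Real.log (2*π))) := by
  have hd : HasDerivAt (fun ε : ℝ => 1 - Real.exp (-(2*π*ε))) (2*π) 0 := by
    have ha : HasDerivAt (fun t : ℝ => -(2*π*t)) (-(2*π)) 0 := by
      exact (((hasDerivAt_id (0:ℝ)).const_mul (2*π)).neg).congr_deriv (by simp)
    have h2 := (Real.hasDerivAt_exp (-(2*π*0))).comp 0 ha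
    have h3 := (h2.neg).const_add 1
    exact h3.congr_deriv (by simp)
  have hslope : Tendsto (fun ε : ℝ => (1 - Real.exp (-(2*π*ε))) / ε)
      (nhdsWithin 0 (Ioi 0)) (nhds (2*π)) := by
    have h1 := (hasDerivAt_iff_tendsto_slope.1 hd).mono_left
      (nhdsWithin_mono 0 (fun x hx => ne_of_gt hx))
    apply h1.congr
    intro ε
    rw [slope_def_field]
    simp [div_eq_mul_inv]
  have hlog := ((Real.continuousAt_log (by positivity : (2*π:ℝ) ≠ 0)).tendsto.comp hslope).neg
  apply hlog.congr'
  filter_upwards [self_mem_nhdsWithin] with ε hε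
  have hεpos : (0:ℝ) < ε := hε
  have hu : 0 < 1 - Real.exp (-(2*π*ε)) := one_sub_exp_neg_pos (by positivity)
  simp only [Function.comp]
  rw [Real.log_div (ne_of_gt hu) (ne_of_gt hεpos)]
  ring

lemma tendsto_B_limit {α : ℝ} (hα : 0 < α) :
    Tendsto (fun ε : ℝ => (Real.exp (-(ε/α)) - 1) * Real.log ε)
      (nhdsWithin 0 (Ioi 0)) (nhds 0) := by
  have hd : HasDerivAt (fun ε : ℝ => Real.exp (-(ε/α))) (-α⁻¹) 0 := by
    have ha : HasDerivAt (fun t : ℝ => -(t/α)) (-α⁻¹) (0:ℝ) := by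
      exact (((hasDerivAt_id (0:ℝ)).div_const α).neg).congr_deriv (by simp)
    have := (Real.hasDerivAt_exp (-(0/α))).comp 0 ha
    simpa [Function.comp_def] using this
  have hslope : Tendsto (fun ε : ℝ => (Real.exp (-(ε/α)) - 1) / ε)
      (nhdsWithin 0 (Ioi 0)) (nhds (-α⁻¹)) := by
    have h1 := (hasDerivAt_iff_tendsto_slope.1 hd).mono_left
      (nhdsWithin_mono 0 (fun x hx => ne_of_gt hx))
    apply h1.congr
    intro ε
    rw [slope_def_field]
    simp
  have hxlog : Tendsto (fun ε : ℝ => ε * Real.log ε) (nhdsWithin 0 (Ioi 0)) (nhds 0) := by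
    have h0 := Real.continuous_mul_log.tendsto 0
    have h1 : Tendsto (fun x : ℝ => x * Real.log x) (nhdsWithin 0 (Ioi 0)) (nhds (0 * Real.log 0)) :=
      h0.mono_left nhdsWithin_le_nhds
    simpa using h1
  have hmul := hslope.mul hxlog
  rw [mul_zero] at hmul
  apply hmul.congr'
  filter_upwards [self_mem_nhdsWithin] with ε hε
  have hεpos : (0:ℝ) < ε := hε
  field_simp

noncomputable def εseq : ℕ → ℝ := fun n => ((n:ℝ)+1)⁻¹

lemma εseq_pos (n : ℕ) : 0 < εseq n := by
  unfold εseq; positivity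

lemma tendsto_εseq : Tendsto εseq atTop (nhdsWithin 0 (Ioi 0)) := by
  apply tendsto_nhdsWithin_of_tendsto_nhds_of_eventually_within
  · have := tendsto_one_div_add_atTop_nhds_zero_nat (𝕜 := ℝ)
    apply this.congr
    intro n
    rw [one_div]
    rfl
  · exact Eventually.of_forall (fun n => εseq_pos n)

lemma εseq_mono : Monotone (fun n => Ioi (εseq n)) := by
  intro m n hmn
  apply Ioi_subset_Ioi
  unfold εseq
  apply inv_anti₀ (by positivity)
  have : (m:ℝ) ≤ n := Nat.cast_le.2 hmn
  linarith

lemma εseq_union : (⋃ n, Ioi (εseq n)) = Ioi (0:ℝ) := by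
  ext x
  simp only [mem_iUnion, mem_Ioi]
  constructor
  · rintro ⟨n, hn⟩
    exact lt_trans (εseq_pos n) hn
  · intro hx
    obtain ⟨n, hn⟩ := exists_nat_one_div_lt hx
    exact ⟨n, by rw [show εseq n = 1/((n:ℝ)+1) by rw [one_div]; rfl]; exact hn⟩

theorem eulerMascheroni_sub_log_integral (α : ℝ) (hα : 0 < α) :
    Real.eulerMascheroniConstant - Real.log (2 * π * α)
      = ∫ t in Set.Ioi (0 : ℝ),
          (2 * π / (Real.exp (2 * π * t) - 1) - Real.exp (-(t / α)) / t) := by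
  set f : ℝ → ℝ := fun t => 2 * π / (Real.exp (2 * π * t) - 1) - Real.exp (-(t / α)) / t with hf
  -- integrability of f on Ioi 0
  have hfint : IntegrableOn f (Ioi (0:ℝ)) := by
    have h1 : IntegrableOn f (Ioc (0:ℝ) 1) := by
      have hconst : IntegrableOn (fun _ : ℝ => π * Real.exp (2*π) + 1/α) (Ioc (0:ℝ) 1) :=
        integrableOn_const measure_Ioc_lt_top.ne
      refine hconst.mono' (Measurable.aestronglyMeasurable (by fun_prop)) ?_
      rw [ae_restrict_iff' measurableSet_Ioc]
      filter_upwards with t ht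
      rw [Real.norm_eq_abs]
      exact f_bound_Ioc hα ht.1 ht.2
    have h2 : IntegrableOn f (Ioi (1:ℝ)) := (A_int one_pos).sub (B_int hα one_pos)
    rw [show Ioi (0:ℝ) = Ioc 0 1 ∪ Ioi 1 from (Ioc_union_Ioi_eq_Ioi zero_le_one).symm]
    exact h1.union h2
  -- closed form on Ioi ε
  have h_eq : ∀ ε : ℝ, 0 < ε → ∫ t in Ioi ε, f t
      = (-Real.log (1 - Real.exp (-(2*π*ε))) + Real.log ε)
        + (Real.exp (-(ε/α)) - 1) * Real.log ε
        - α⁻¹ * ∫ t in Ioi ε, Real.exp (-(t/α)) * Real.log t := by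
    intro ε hε
    rw [hf]
    rw [integral_sub (A_int hε) (B_int hα hε), FTC_A hε, intB hα hε]
    ring
  -- limit of integrals over Ioi (εseq n)
  have htend1 : Tendsto (fun n => ∫ t in Ioi (εseq n), f t) atTop
      (nhds (∫ t in Ioi (0:ℝ), f t)) := by
    have := tendsto_setIntegral_of_monotone (fun n => measurableSet_Ioi) εseq_mono
      (εseq_union ▸ hfint)
    rwa [εseq_union] at this
  have hgtend : Tendsto (fun n => ∫ t in Ioi (εseq n), Real.exp (-(t/α)) * Real.log t) atTop
      (nhds (α * (Real.log α - Real.eulerMascheroniConstant))) := by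
    have := tendsto_setIntegral_of_monotone (fun n => measurableSet_Ioi) εseq_mono
      (εseq_union ▸ integrableOn_exp_neg_div_log hα)
    rw [εseq_union, change_var hα] at this
    exact this
  have htend2 : Tendsto (fun n => ∫ t in Ioi (εseq n), f t) atTop
      (nhds ((-Real.log (2*π) + 0) - α⁻¹ * (α * (Real.log α - Real.eulerMascheroniConstant)))) := by
    have hA := tendsto_A_limit.comp tendsto_εseq
    have hB := (tendsto_B_limit hα).comp tendsto_εseq
    have hG := hgtend.const_mul α⁻¹
    have := (hA.add hB).sub hG
    apply this.congr
    intro n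
    rw [Function.comp, Function.comp]
    exact (h_eq (εseq n) (εseq_pos n)).symm
  have hval := tendsto_nhds_unique htend1 htend2
  rw [hval]
  rw [Real.log_mul (by positivity : (2*π:ℝ) ≠ 0) (ne_of_gt hα)]
  field_simp
  ring
end

section
/- For all real a > 0 and t > 0, ∫_0^∞ { ( 1/(e^u - 1) - 1/u + 1/2 ) e^{-tu}/u + (e^{-ua} - e^{-tu})/(2u) } du = log Γ(t) - (t - 1/2) log t + t - (1/2) log(2π) + (1/2) log(t/a). -/
open Real MeasureTheory Filter

open Set Nat
open scoped Topology

namespace BinetAux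



noncomputable def g (u : ℝ) : ℝ := (Real.exp u - 1)⁻¹ - u⁻¹ + 1/2

lemma expm1_pos {u : ℝ} (hu : 0 < u) : 0 < Real.exp u - 1 := by
  linarith [Real.add_one_le_exp u]

lemma exp_cubic {u : ℝ} (hu : 0 ≤ u) : 1 + u + u^2/2 + u^3/6 ≤ Real.exp u := by
  have h := Real.sum_le_exp_of_nonneg hu 4
  norm_num [Finset.sum_range_succ, Nat.factorial] at h
  linarith

lemma two_sub_mul_exp_le {u : ℝ} (hu : 0 ≤ u) : (2 - u) * Real.exp u ≤ u + 2 := by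
  set f : ℝ → ℝ := fun y => y + 2 - (2 - y) * Real.exp y with hf
  have hderiv : ∀ x : ℝ, HasDerivAt f (1 - (1 - x) * Real.exp x) x := by
    intro x
    have h1 : HasDerivAt (fun y : ℝ => (2 - y) * Real.exp y)
        ((-1) * Real.exp x + (2 - x) * Real.exp x) x :=
      ((hasDerivAt_id x).const_sub 2).mul (Real.hasDerivAt_exp x)
    have h2 : HasDerivAt (fun y : ℝ => y + 2) 1 x := (hasDerivAt_id x).add_const 2
    refine (h2.sub h1).congr_deriv ?_
    ring
  have hmono : MonotoneOn f (Ici 0) := by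
    refine monotoneOn_of_deriv_nonneg (convex_Ici 0) ?_ ?_ ?_
    · exact (Continuous.continuousOn (by continuity))
    · intro x _; exact (hderiv x).differentiableAt.differentiableWithinAt
    · intro x _
      rw [(hderiv x).deriv]
      have : (1 - x) * Real.exp x ≤ 1 := by
        have h := Real.add_one_le_exp (-x)
        calc (1 - x) * Real.exp x ≤ Real.exp (-x) * Real.exp x :=
              mul_le_mul_of_nonneg_right (by linarith) (Real.exp_pos x).le
          _ = 1 := by rw [← Real.exp_add]; simp
      linarith
  have h0 : f 0 = 0 := by simp [hf]
  have := hmono (self_mem_Ici) hu hu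
  rw [h0] at this
  simp only [hf] at this
  linarith

lemma g_nonneg {u : ℝ} (hu : 0 < u) : 0 ≤ g u := by
  have hE := expm1_pos hu
  have key : 0 ≤ 2*u - 2*(Real.exp u - 1) + u*(Real.exp u - 1) := by
    nlinarith [two_sub_mul_exp_le hu.le]
  have : g u = (2*u - 2*(Real.exp u - 1) + u*(Real.exp u - 1)) / (2*u*(Real.exp u - 1)) := by
    rw [g]; field_simp
  rw [this]
  positivity

lemma g_le {u : ℝ} (hu : 0 < u) : g u ≤ u/4 := by
  have hE := expm1_pos hu
  have hc := exp_cubic hu.le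
  have hq : (0:ℝ) ≤ u^2-2*u+4 := by nlinarith [sq_nonneg (u-1)]
  have hm := mul_le_mul_of_nonneg_right
    (show u + u^2/2 + u^3/6 ≤ Real.exp u - 1 by linarith) hq
  have key : 0 ≤ (Real.exp u - 1)*(u^2-2*u+4) - 4*u := by
    nlinarith [pow_nonneg hu.le 3, pow_nonneg hu.le 4, pow_nonneg hu.le 5]
  have : u/4 - g u = ((Real.exp u - 1)*(u^2-2*u+4) - 4*u) / (4*u*(Real.exp u - 1)) := by
    rw [g]; field_simp; ring
  nlinarith [div_nonneg key (by positivity : (0:ℝ) ≤ 4*u*(Real.exp u - 1))]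

lemma g_le_half {u : ℝ} (hu : 0 < u) : g u ≤ 1/2 := by
  have hE := expm1_pos hu
  have h : u ≤ Real.exp u - 1 := by linarith [Real.add_one_le_exp u]
  have h2 : (Real.exp u - 1)⁻¹ ≤ u⁻¹ := inv_anti₀ hu h
  rw [g]; linarith

lemma g_meas : Measurable g := by
  unfold g
  fun_prop




lemma int_exp {b : ℝ} (hb : 0 < b) :
    IntegrableOn (fun u : ℝ => Real.exp (-(b * u))) (Ioi 0) := by
  simpa [neg_mul] using exp_neg_integrableOn_Ioi 0 hb

lemma expIoi {b : ℝ} (hb : 0 < b) :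
    ∫ u in Ioi (0:ℝ), Real.exp (-(b * u)) = 1 / b := by
  have hderiv : ∀ x ∈ Ici (0:ℝ),
      HasDerivAt (fun u : ℝ => -Real.exp (-(b * u)) / b) (Real.exp (-(b * x))) x := by
    intro x _
    have h1 : HasDerivAt (fun u : ℝ => -(b * u)) (-b) x := by
      simpa using (hasDerivAt_id x).const_mul (-b)
    have h2 := (h1.exp).neg.div_const b
    refine h2.congr_deriv ?_
    field_simp
  have htend : Tendsto (fun u : ℝ => -Real.exp (-(b * u)) / b) atTop (𝓝 0) := by
    have h1 : Tendsto (fun u : ℝ => -(b * u)) atTop atBot := by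
      exact tendsto_neg_atTop_atBot.comp (tendsto_const_mul_atTop_of_pos hb |>.mpr tendsto_id)
    have h2 : Tendsto (fun u : ℝ => Real.exp (-(b * u))) atTop (𝓝 0) :=
      Real.tendsto_exp_atBot.comp h1
    simpa using (h2.neg).div_const b
  have := integral_Ioi_of_hasDerivAt_of_tendsto' hderiv (int_exp hb) htend
  rw [this]
  simp
  field_simp




lemma inner_eq {a b u : ℝ} (hu : 0 < u) :
    (∫ s in a..b, Real.exp (-(s * u))) = (Real.exp (-(a * u)) - Real.exp (-(b * u))) / u := by
  have hderiv : ∀ s ∈ uIcc a b,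
      HasDerivAt (fun s : ℝ => -Real.exp (-(s * u)) / u) (Real.exp (-(s * u))) s := by
    intro s _
    have h1 : HasDerivAt (fun s : ℝ => -(s * u)) (-u) s := by
      simpa using (hasDerivAt_id s).mul_const (-u)
    have h2 := (h1.exp).neg.div_const u
    refine h2.congr_deriv ?_
    field_simp
  have hint : IntervalIntegrable (fun s : ℝ => Real.exp (-(s * u))) volume a b :=
    (Continuous.intervalIntegrable (by continuity) a b)
  rw [intervalIntegral.integral_eq_sub_of_hasDerivAt hderiv hint]
  ring

lemma swap_lemma (f : ℝ → ℝ) (hf : Measurable f) (C : ℝ)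
    (hbd : ∀ u ∈ Ioi (0:ℝ), |f u| ≤ C) {a b : ℝ} (ha : 0 < a) (hab : a ≤ b) :
    ∫ u in Ioi (0:ℝ), f u * ((Real.exp (-(a * u)) - Real.exp (-(b * u))) / u)
      = ∫ s in a..b, ∫ u in Ioi (0:ℝ), f u * Real.exp (-(s * u)) := by
  have hmeas : AEStronglyMeasurable (fun p : ℝ × ℝ => f p.1 * Real.exp (-(p.2 * p.1)))
      ((volume.restrict (Ioi (0:ℝ))).prod (volume.restrict (Ioc a b))) := by
    apply Measurable.aestronglyMeasurable
    exact (hf.comp measurable_fst).mul ((measurable_snd.mul measurable_fst).neg.exp)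
  have hInt : Integrable (Function.uncurry fun u s : ℝ => f u * Real.exp (-(s * u)))
      ((volume.restrict (Ioi (0:ℝ))).prod (volume.restrict (Ioc a b))) := by
    rw [show (Function.uncurry fun u s : ℝ => f u * Real.exp (-(s * u)))
      = fun p : ℝ × ℝ => f p.1 * Real.exp (-(p.2 * p.1)) from rfl]
    rw [integrable_prod_iff hmeas]
    constructor
    · refine (ae_restrict_iff' measurableSet_Ioi).mpr (Filter.Eventually.of_forall fun u hu => ?_)
      exact ((Continuous.integrableOn_Ioc (by continuity)))
    · refine Integrable.mono'
        (g := fun u : ℝ => C * Real.exp (-(a * u)) * (b - a)) ?_ ?_ ?_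
      · exact ((int_exp ha).const_mul C).mul_const (b - a)
      · exact (hmeas.norm.integral_prod_right')
      · refine (ae_restrict_iff' measurableSet_Ioi).mpr (Filter.Eventually.of_forall fun u hu => ?_)
        rw [Real.norm_eq_abs, abs_of_nonneg (by positivity)]
        calc (∫ s in Ioc a b, ‖f u * Real.exp (-(s * u))‖)
            ≤ C * Real.exp (-(a * u)) * (volume (Ioc a b)).toReal := by
              rw [show (∫ s in Ioc a b, ‖f u * Real.exp (-(s * u))‖)
                = ‖∫ s in Ioc a b, ‖f u * Real.exp (-(s * u))‖‖ from
                  (Real.norm_of_nonneg (integral_nonneg fun s => norm_nonneg _)).symm]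
              apply norm_setIntegral_le_of_norm_le_const (by simp)
              intro s hs
              rw [norm_norm]
              have hC : 0 ≤ C := (abs_nonneg _).trans (hbd u hu)
              rw [norm_mul, Real.norm_eq_abs, Real.norm_eq_abs, Real.abs_exp]
              have he : Real.exp (-(s * u)) ≤ Real.exp (-(a * u)) := by
                apply Real.exp_le_exp.mpr
                have : a * u ≤ s * u := mul_le_mul_of_nonneg_right hs.1.le (le_of_lt hu)
                linarith
              exact mul_le_mul (hbd u hu) he (Real.exp_pos _).le hC
          _ ≤ C * Real.exp (-(a * u)) * (b - a) := by
              rw [Real.volume_Ioc, ENNReal.toReal_ofReal (by linarith)]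
  calc ∫ u in Ioi (0:ℝ), f u * ((Real.exp (-(a * u)) - Real.exp (-(b * u))) / u)
      = ∫ u in Ioi (0:ℝ), ∫ s in Ioc a b, f u * Real.exp (-(s * u)) := by
        refine setIntegral_congr_fun measurableSet_Ioi fun u hu => ?_
        rw [← intervalIntegral.integral_of_le hab, intervalIntegral.integral_const_mul,
          inner_eq hu]
    _ = ∫ s in Ioc a b, ∫ u in Ioi (0:ℝ), f u * Real.exp (-(s * u)) :=
        integral_integral_swap hInt
    _ = ∫ s in a..b, ∫ u in Ioi (0:ℝ), f u * Real.exp (-(s * u)) :=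
        (intervalIntegral.integral_of_le hab).symm



lemma diff_bound {a b u : ℝ} (hab : a ≤ b) (hu : 0 < u) :
    0 ≤ (Real.exp (-(a * u)) - Real.exp (-(b * u))) / u ∧
    (Real.exp (-(a * u)) - Real.exp (-(b * u))) / u ≤ (b - a) * Real.exp (-(a * u)) := by
  have hXY : Real.exp (-(b * u)) = Real.exp (-(a * u)) * Real.exp (-((b - a) * u)) := by
    rw [← Real.exp_add]; ring_nf
  have hE : 1 - (b - a) * u ≤ Real.exp (-((b - a) * u)) := by
    have := Real.add_one_le_exp (-((b - a) * u)); linarith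
  constructor
  · apply div_nonneg _ hu.le
    have : Real.exp (-(b*u)) ≤ Real.exp (-(a*u)) := by
      apply Real.exp_le_exp.mpr; nlinarith
    linarith
  · rw [div_le_iff₀ hu, hXY]
    nlinarith [Real.exp_pos (-(a*u))]

lemma int_frullani {a b : ℝ} (ha : 0 < a) (hb : 0 < b) :
    IntegrableOn (fun u : ℝ => (Real.exp (-(a * u)) - Real.exp (-(b * u))) / u) (Ioi 0) := by
  have hmeas : AEStronglyMeasurable
      (fun u : ℝ => (Real.exp (-(a * u)) - Real.exp (-(b * u))) / u)
      (volume.restrict (Ioi 0)) := by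
    apply Measurable.aestronglyMeasurable; fun_prop
  rcases le_total a b with h | h
  · refine Integrable.mono' (g := fun u => (b - a) * Real.exp (-(a * u)))
      ((int_exp ha).const_mul _) hmeas ?_
    refine (ae_restrict_iff' measurableSet_Ioi).mpr (Filter.Eventually.of_forall fun u hu => ?_)
    rw [Real.norm_eq_abs, abs_of_nonneg (diff_bound h hu).1]
    exact (diff_bound h hu).2
  · refine Integrable.mono' (g := fun u => (a - b) * Real.exp (-(b * u)))
      ((int_exp hb).const_mul _) hmeas ?_
    refine (ae_restrict_iff' measurableSet_Ioi).mpr (Filter.Eventually.of_forall fun u hu => ?_)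
    have h1 := (diff_bound h hu).1
    have h2 := (diff_bound h hu).2
    rw [Real.norm_eq_abs, show (Real.exp (-(a * u)) - Real.exp (-(b * u))) / u
      = -((Real.exp (-(b * u)) - Real.exp (-(a * u))) / u) by ring, abs_neg,
      abs_of_nonneg h1]
    exact h2

lemma frullani_le {a b : ℝ} (ha : 0 < a) (hab : a ≤ b) :
    ∫ u in Ioi (0:ℝ), (Real.exp (-(a * u)) - Real.exp (-(b * u))) / u = Real.log (b / a) := by
  have hb : 0 < b := lt_of_lt_of_le ha hab
  have h := swap_lemma (fun _ => 1) measurable_const 1 (by intro u _; simp) ha hab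
  simp only [one_mul] at h
  rw [h, ← integral_one_div_of_pos ha hb]
  apply intervalIntegral.integral_congr
  intro s hs
  have hs0 : 0 < s := lt_of_lt_of_le ha (by rcases hs with ⟨h1, _⟩; simpa [inf_eq_left.mpr hab] using h1)
  simpa using expIoi hs0

lemma frullani {a b : ℝ} (ha : 0 < a) (hb : 0 < b) :
    ∫ u in Ioi (0:ℝ), (Real.exp (-(a * u)) - Real.exp (-(b * u))) / u = Real.log (b / a) := by
  rcases le_total a b with h | h
  · exact frullani_le ha h
  · have h1 := frullani_le hb h
    rw [show (fun u : ℝ => (Real.exp (-(a * u)) - Real.exp (-(b * u))) / u)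
      = fun u : ℝ => -((Real.exp (-(b * u)) - Real.exp (-(a * u))) / u) by
        funext u; ring]
    rw [integral_neg, h1, Real.log_div ha.ne' hb.ne', Real.log_div hb.ne' ha.ne']
    ring




noncomputable def J (t : ℝ) : ℝ := ∫ u in Ioi (0:ℝ), g u * Real.exp (-(t * u)) / u

noncomputable def K (s : ℝ) : ℝ := ∫ u in Ioi (0:ℝ), g u * Real.exp (-(s * u))

lemma int_J {t : ℝ} (ht : 0 < t) :
    IntegrableOn (fun u : ℝ => g u * Real.exp (-(t * u)) / u) (Ioi 0) := by
  refine Integrable.mono' (g := fun u => (1/4) * Real.exp (-(t * u)))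
    ((int_exp ht).const_mul _) (Measurable.aestronglyMeasurable (by exact (g_meas.mul (by fun_prop)).div measurable_id)) ?_
  refine (ae_restrict_iff' measurableSet_Ioi).mpr (Filter.Eventually.of_forall fun u hu => ?_)
  have hu' := mem_Ioi.mp hu
  rw [Real.norm_eq_abs, abs_of_nonneg
    (div_nonneg (mul_nonneg (g_nonneg hu') (Real.exp_pos _).le) hu'.le)]
  rw [div_le_iff₀ hu', mul_comm (1/4 * Real.exp (-(t*u))) u]
  calc g u * Real.exp (-(t * u)) ≤ u/4 * Real.exp (-(t*u)) :=
        mul_le_mul_of_nonneg_right (g_le hu') (Real.exp_pos _).le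
    _ = u * (1/4 * Real.exp (-(t*u))) := by ring

lemma int_K {s : ℝ} (hs : 0 < s) :
    IntegrableOn (fun u : ℝ => g u * Real.exp (-(s * u))) (Ioi 0) := by
  refine Integrable.mono' (g := fun u => (1/2) * Real.exp (-(s * u)))
    ((int_exp hs).const_mul _) (Measurable.aestronglyMeasurable (by exact g_meas.mul (by fun_prop))) ?_
  refine (ae_restrict_iff' measurableSet_Ioi).mpr (Filter.Eventually.of_forall fun u hu => ?_)
  rw [Real.norm_eq_abs, abs_of_nonneg (mul_nonneg (g_nonneg (mem_Ioi.mp hu)) (Real.exp_pos _).le)]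
  exact mul_le_mul_of_nonneg_right (g_le_half (mem_Ioi.mp hu)) (Real.exp_pos _).le

lemma J_abs_le {t : ℝ} (ht : 0 < t) : |J t| ≤ 1 / (4 * t) := by
  have h1 : |J t| ≤ ∫ u in Ioi (0:ℝ), (1/4) * Real.exp (-(t * u)) := by
    rw [← Real.norm_eq_abs]
    apply norm_integral_le_of_norm_le ((int_exp ht).const_mul _)
    refine (ae_restrict_iff' measurableSet_Ioi).mpr (Filter.Eventually.of_forall fun u hu => ?_)
    have hu' := mem_Ioi.mp hu
    rw [Real.norm_eq_abs, abs_of_nonneg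
      (div_nonneg (mul_nonneg (g_nonneg hu') (Real.exp_pos _).le) hu'.le)]
    rw [div_le_iff₀ hu']
    calc g u * Real.exp (-(t * u)) ≤ u/4 * Real.exp (-(t*u)) :=
          mul_le_mul_of_nonneg_right (g_le hu') (Real.exp_pos _).le
      _ = 1/4 * Real.exp (-(t*u)) * u := by ring
  rw [integral_const_mul, expIoi ht] at h1
  calc |J t| ≤ 1/4 * (1/t) := h1
    _ = 1 / (4*t) := by field_simp

lemma J_tendsto (t : ℝ) (ht : 0 < t) :
    Tendsto (fun n : ℕ => J (t + n)) atTop (𝓝 0) := by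
  apply squeeze_zero_norm (fun n => J_abs_le (by positivity))
  have h1 : Tendsto (fun n : ℕ => 4 * (t + (n:ℝ))) atTop atTop := by
    apply Tendsto.const_mul_atTop (by norm_num)
    exact tendsto_atTop_add_const_left _ t tendsto_natCast_atTop_atTop
  simpa [one_div, Function.comp_def] using tendsto_inv_atTop_zero.comp h1

lemma K_antitone {x y : ℝ} (hx : 0 < x) (hxy : x ≤ y) : K y ≤ K x := by
  apply setIntegral_mono_on (int_K (lt_of_lt_of_le hx hxy)) (int_K hx) measurableSet_Ioi
  intro u hu
  apply mul_le_mul_of_nonneg_left _ (g_nonneg (mem_Ioi.mp hu))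
  apply Real.exp_le_exp.mpr
  nlinarith [mem_Ioi.mp hu]

lemma K_intervalIntegrable {c d : ℝ} (hc : 0 < c) (hcd : c ≤ d) :
    IntervalIntegrable K volume c d := by
  apply AntitoneOn.intervalIntegrable
  intro x hx y hy hxy
  rw [uIcc_of_le hcd] at hx hy
  exact K_antitone (lt_of_lt_of_le hc hx.1) hxy



noncomputable def G (t : ℝ) : ℝ := (t + 1/2) * (Real.log (t+1) - Real.log t) - 1

lemma K_sub {s : ℝ} (hs : 0 < s) :
    K s - K (s+1) = 1/(s+1) - (Real.log (s+1) - Real.log s) + (1/2)*(1/s - 1/(s+1)) := by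
  have hs1 : 0 < s + 1 := by linarith
  have h1 : K s - K (s+1)
      = ∫ u in Ioi (0:ℝ), (g u * Real.exp (-(s * u)) - g u * Real.exp (-((s+1) * u))) :=
    (integral_sub (int_K hs) (int_K hs1)).symm
  have h2 : ∀ u ∈ Ioi (0:ℝ), g u * Real.exp (-(s * u)) - g u * Real.exp (-((s+1) * u))
      = (Real.exp (-((s+1) * u))
          - (Real.exp (-(s * u)) - Real.exp (-((s+1) * u))) / u)
          + (Real.exp (-(s * u)) - Real.exp (-((s+1) * u))) / 2 := by
    intro u hu
    have hu' := mem_Ioi.mp hu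
    have hE := expm1_pos hu'
    have hx : Real.exp (-((s+1) * u)) = Real.exp (-(s * u)) * (Real.exp u)⁻¹ := by
      rw [← Real.exp_neg, ← Real.exp_add]; ring_nf
    rw [hx, g]
    have h3 : Real.exp u ≠ 0 := (Real.exp_pos u).ne'
    field_simp
  have hA : Integrable (fun u : ℝ => Real.exp (-((s+1) * u))
      - (Real.exp (-(s * u)) - Real.exp (-((s+1) * u))) / u) (volume.restrict (Ioi 0)) :=
    (int_exp hs1).sub (int_frullani hs hs1)
  have hB : Integrable (fun u : ℝ => (Real.exp (-(s * u)) - Real.exp (-((s+1) * u))) / 2)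
      (volume.restrict (Ioi 0)) := ((int_exp hs).sub (int_exp hs1)).div_const 2
  rw [h1, setIntegral_congr_fun measurableSet_Ioi h2, integral_add hA hB,
    integral_sub (int_exp hs1) (int_frullani hs hs1), integral_div,
    integral_sub (int_exp hs) (int_exp hs1), expIoi hs, expIoi hs1,
    frullani hs hs1, Real.log_div hs1.ne' hs.ne']
  ring

lemma abs_g_le_half : ∀ u ∈ Ioi (0:ℝ), |g u| ≤ 1/2 := fun u hu =>
  abs_le.mpr ⟨by linarith [g_nonneg (mem_Ioi.mp hu)], g_le_half (mem_Ioi.mp hu)⟩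

lemma J_sub {t : ℝ} (ht : 0 < t) : J t - J (t+1) = ∫ s in t..(t+1), K s := by
  have ht1 : (0:ℝ) < t + 1 := by linarith
  have h1 : J t - J (t+1)
      = ∫ u in Ioi (0:ℝ), g u * ((Real.exp (-(t * u)) - Real.exp (-((t+1) * u))) / u) := by
    rw [J, J, ← integral_sub (int_J ht) (int_J ht1)]
    refine setIntegral_congr_fun measurableSet_Ioi fun u hu => ?_
    have hu' := (mem_Ioi.mp hu).ne'
    field_simp
  rw [h1, swap_lemma g g_meas (1/2) abs_g_le_half ht (by linarith)]
  rfl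

lemma contOn_c {t : ℝ} (ht : 0 < t) :
    ContinuousOn (fun s : ℝ => 1/(s+1) - (Real.log (s+1) - Real.log s) + (1/2)*(1/s - 1/(s+1)))
      (uIcc t (t+1)) := by
  have hsub : uIcc t (t+1) ⊆ {x : ℝ | 0 < x} := by
    rw [uIcc_of_le (by linarith)]
    intro x hx; exact lt_of_lt_of_le ht hx.1
  intro x hx
  have hx0 : 0 < x := hsub hx
  apply ContinuousAt.continuousWithinAt
  have l1 : ContinuousAt (fun s : ℝ => Real.log (s+1)) x :=
    (Real.continuousAt_log (by positivity)).comp (by fun_prop)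
  have l2 : ContinuousAt Real.log x := Real.continuousAt_log hx0.ne'
  have d1 : ContinuousAt (fun s : ℝ => 1/(s+1)) x := by
    apply ContinuousAt.div continuousAt_const (by fun_prop) (by positivity)
  have d2 : ContinuousAt (fun s : ℝ => 1/s) x := by
    apply ContinuousAt.div continuousAt_const (by fun_prop) hx0.ne'
  exact (d1.sub (l1.sub l2)).add (continuousAt_const.mul (d2.sub d1))

lemma Delta_rec {t : ℝ} (ht : 0 < t) :
    (J t - J (t+1)) - (J (t+1) - J (t+2)) = G t - G (t+1) := by
  have ht1 : (0:ℝ) < t + 1 := by linarith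
  have hKi2 : IntervalIntegrable (fun s : ℝ => K (s+1)) volume t (t+1) := by
    have h := (K_intervalIntegrable ht1 (by linarith : t+1 ≤ t+2)).comp_add_right 1
    rwa [show t + 2 - 1 = t + 1 by ring, show t + 1 - 1 = t by ring] at h
  have e1 : J (t+1) - J (t+2) = ∫ s in t..(t+1), K (s+1) := by
    rw [show t+2 = t+1+1 by ring, J_sub ht1, intervalIntegral.integral_comp_add_right K 1]
  rw [J_sub ht, e1, ← intervalIntegral.integral_sub
    (K_intervalIntegrable ht (by linarith)) hKi2]
  have hpt : ∀ s ∈ uIcc t (t+1), K s - K (s+1)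
      = 1/(s+1) - (Real.log (s+1) - Real.log s) + (1/2)*(1/s - 1/(s+1)) := by
    intro s hs
    rw [uIcc_of_le (by linarith : t ≤ t+1)] at hs
    exact K_sub (lt_of_lt_of_le ht hs.1)
  rw [intervalIntegral.integral_congr hpt]
  have hderiv : ∀ s ∈ uIcc t (t+1),
      HasDerivAt (fun s : ℝ => -((s + 1/2) * (Real.log (s+1) - Real.log s)))
        (1/(s+1) - (Real.log (s+1) - Real.log s) + (1/2)*(1/s - 1/(s+1))) s := by
    intro s hs
    rw [uIcc_of_le (by linarith : t ≤ t+1)] at hs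
    have hs0 : 0 < s := lt_of_lt_of_le ht hs.1
    have hl1 : HasDerivAt (fun s : ℝ => Real.log (s+1)) (1/(s+1)) s := by
      have := (((hasDerivAt_id s).add_const 1).log (by positivity : s + 1 ≠ 0))
      simpa using this
    have hl2 : HasDerivAt Real.log s⁻¹ s := Real.hasDerivAt_log hs0.ne'
    have h := (((hasDerivAt_id s).add_const (1/2 : ℝ)).mul (hl1.sub hl2)).neg
    refine h.congr_deriv ?_
    simp only [Pi.sub_apply, id]
    field_simp
    ring
  rw [intervalIntegral.integral_eq_sub_of_hasDerivAt hderiv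
    ((contOn_c ht).intervalIntegrable)]
  rw [G, G]
  ring

lemma G_tendsto {t : ℝ} (ht : 0 < t) :
    Tendsto (fun n : ℕ => G (t + n)) atTop (𝓝 0) := by
  have key : Tendsto (fun x : ℝ => (x + 1/2) * Real.log (1 + 1/x) - 1) atTop (𝓝 0) := by
    have h1 := Real.tendsto_mul_log_one_add_div_atTop 1
    have h2 : Tendsto (fun x : ℝ => Real.log (1 + 1/x)) atTop (𝓝 0) := by
      have h3 : Tendsto (fun x : ℝ => 1 + 1/x) atTop (𝓝 1) := by
        simpa [one_div] using (tendsto_const_nhds : Tendsto (fun _ : ℝ => (1:ℝ)) atTop (𝓝 1)).add tendsto_inv_atTop_zero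
      have h4 := (Real.continuousAt_log one_ne_zero).tendsto.comp h3
      simpa [Function.comp_def] using h4
    have h5 := (h1.add (h2.const_mul (1/2))).sub_const 1
    norm_num at h5
    apply h5.congr
    intro x
    ring
  have hN : Tendsto (fun n : ℕ => t + (n:ℝ)) atTop atTop :=
    tendsto_atTop_add_const_left _ t tendsto_natCast_atTop_atTop
  have := key.comp hN
  apply this.congr
  intro n
  have hx : (0:ℝ) < t + n := by positivity
  simp only [Function.comp_apply, G]
  rw [show 1 + 1/(t+(n:ℝ)) = ((t+n)+1)/(t+n) by field_simp,
    Real.log_div (by positivity) hx.ne']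

lemma Delta_eq_G {t : ℝ} (ht : 0 < t) : J t - J (t+1) = G t := by
  set W : ℕ → ℝ := fun n => (J (t+n) - J (t+n+1)) - G (t+n) with hW
  have hrec : ∀ n : ℕ, W (n+1) = W n := by
    intro n
    have h := Delta_rec (show (0:ℝ) < t + n by positivity)
    simp only [hW]
    push_cast
    ring_nf at h ⊢
    linarith [h]
  have hconst : ∀ n : ℕ, W n = W 0 := by
    intro n
    induction n with
    | zero => rfl
    | succ k ih => rw [hrec k, ih]
  have hlim : Tendsto W atTop (𝓝 0) := by
    have h1 := J_tendsto t ht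
    have h2 : Tendsto (fun n : ℕ => J (t + n + 1)) atTop (𝓝 0) := by
      have := J_tendsto (t+1) (by linarith)
      apply this.congr
      intro n
      rw [show t + 1 + (n:ℝ) = t + n + 1 by ring]
    have h3 := G_tendsto ht
    simpa using (h1.sub h2).sub h3
  have hlim2 : Tendsto W atTop (𝓝 (W 0)) :=
    tendsto_const_nhds.congr fun n => (hconst n).symm
  have h0 : W 0 = 0 := tendsto_nhds_unique hlim2 hlim
  simp only [hW, Nat.cast_zero, add_zero] at h0
  linarith



lemma tele {t : ℝ} (ht : 0 < t) (N : ℕ) :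
    J t = (∑ n ∈ Finset.range N, G (t + n)) + J (t + N) := by
  induction N with
  | zero => simp
  | succ k ih =>
    have h := Delta_eq_G (show (0:ℝ) < t + k by positivity)
    rw [Finset.sum_range_succ]
    push_cast
    rw [show t + ((k:ℝ)+1) = t + k + 1 by ring]
    rw [ih]
    push_cast
    linarith

lemma S_tendsto_J {t : ℝ} (ht : 0 < t) :
    Tendsto (fun N : ℕ => ∑ n ∈ Finset.range N, G (t + n)) atTop (𝓝 (J t)) := by
  have h := tendsto_const_nhds (x := J t) (f := atTop (α := ℕ)) |>.sub (J_tendsto t ht)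
  rw [sub_zero] at h
  apply h.congr
  intro N
  have := tele ht N
  linarith

lemma sum_G_closed (t : ℝ) (N : ℕ) :
    ∑ n ∈ Finset.range N, G (t + n)
      = (t + N + 1/2) * Real.log (t + N) - (t + 1/2) * Real.log t
        - (∑ m ∈ Finset.range N, Real.log (t + m + 1)) - N := by
  induction N with
  | zero => simp
  | succ k ih =>
    rw [Finset.sum_range_succ, Finset.sum_range_succ, ih, G]
    push_cast
    simp only [show ∀ x:ℕ, t + (x:ℝ) + 1 = 1 + t + x from fun x => by ring]
    ring_nf

lemma log_factorial (N : ℕ) (hN : 1 ≤ N) :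
    Real.log (N !) = Real.log (Stirling.stirlingSeq N) + (1/2) * Real.log (2*N)
      + N * Real.log N - N := by
  have hNpos : (0:ℝ) < N := by exact_mod_cast hN
  have hfac : (0:ℝ) < (N ! : ℝ) := by exact_mod_cast Nat.factorial_pos N
  have hden : (0:ℝ) < Real.sqrt (2*N) * ((N:ℝ) / Real.exp 1) ^ N := by positivity
  have h1 : Real.log (Stirling.stirlingSeq N)
      = Real.log (N !) - (Real.log (Real.sqrt (2*N)) + N * Real.log ((N:ℝ) / Real.exp 1)) := by
    rw [Stirling.stirlingSeq, Real.log_div hfac.ne' hden.ne',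
      Real.log_mul (by positivity) (by positivity), Real.log_pow]
    try push_cast
    try ring
  rw [Real.log_sqrt (by positivity), Real.log_div hNpos.ne' (Real.exp_pos 1).ne',
    Real.log_exp] at h1
  linarith

lemma stirling_log_tendsto :
    Tendsto (fun N : ℕ => Real.log (Stirling.stirlingSeq N)) atTop
      (𝓝 ((1/2) * Real.log π)) := by
  have h := (Real.continuousAt_log (by positivity : Real.sqrt π ≠ 0)).tendsto.comp
    Stirling.tendsto_stirlingSeq_sqrt_pi
  rw [Real.log_sqrt Real.pi_pos.le] at h
  simpa [div_eq_mul_inv, mul_comm, Function.comp_def] using h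

lemma S_tendsto_RHS {t : ℝ} (ht : 0 < t) :
    Tendsto (fun N : ℕ => ∑ n ∈ Finset.range N, G (t + n)) atTop
      (𝓝 (Real.log (Real.Gamma t) - (t - 1/2) * Real.log t + t
          - (1/2) * Real.log 2 - (1/2) * Real.log π)) := by
  have key : ∀ N : ℕ, 1 ≤ N →
      ∑ n ∈ Finset.range N, G (t + n)
        = Real.BohrMollerup.logGammaSeq t N - (t - 1/2) * Real.log t
          - Real.log (Stirling.stirlingSeq N) - (1/2) * Real.log 2
          + ((t + N + 1/2) * Real.log (1 + t / N)) := by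
    intro N hN
    have hNpos : (0:ℝ) < N := by exact_mod_cast hN
    have ha : ∑ m ∈ Finset.range N, Real.log (t + m + 1)
        = (∑ m ∈ Finset.range (N+1), Real.log (t + m)) - Real.log t := by
      rw [Finset.sum_range_succ']
      have e : ∀ i ∈ Finset.range N, Real.log (t + ((i:ℕ):ℝ) + 1) = Real.log (t + ((i:ℝ) + 1)) :=
        fun i _ => by rw [add_assoc]
      rw [Finset.sum_congr rfl e]
      simp
    have hc : Real.BohrMollerup.logGammaSeq t N
        = t * Real.log N + Real.log (N !) - ∑ m ∈ Finset.range (N+1), Real.log (t + m) := rfl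
    have hd : Real.log (t + (N:ℝ)) = Real.log (1 + t/(N:ℝ)) + Real.log (N:ℝ) := by
      have he : t + (N:ℝ) = (1 + t/(N:ℝ)) * (N:ℝ) := by field_simp; ring
      rw [he, Real.log_mul (by positivity) hNpos.ne']
    have h2N : Real.log (2*(N:ℝ)) = Real.log 2 + Real.log (N:ℝ) :=
      Real.log_mul two_ne_zero hNpos.ne'
    rw [sum_G_closed, ha, hc, log_factorial N hN, h2N, hd]
    ring
  apply Tendsto.congr' (EventuallyEq.symm
    (eventually_atTop.mpr ⟨1, fun N hN => (key N hN)⟩))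
  have h1 : Tendsto (fun N : ℕ => (N:ℝ) * Real.log (1 + t/(N:ℝ))) atTop (𝓝 t) :=
    (Real.tendsto_mul_log_one_add_div_atTop t).comp tendsto_natCast_atTop_atTop
  have h2 : Tendsto (fun N : ℕ => Real.log (1 + t/(N:ℝ))) atTop (𝓝 0) := by
    have h3 : Tendsto (fun N : ℕ => 1 + t/(N:ℝ)) atTop (𝓝 1) := by
      simpa using tendsto_const_nhds.add (tendsto_const_div_atTop_nhds_zero_nat t)
    simpa [Function.comp_def] using (Real.continuousAt_log one_ne_zero).tendsto.comp h3
  have h4 : Tendsto (fun N : ℕ => (t + N + 1/2) * Real.log (1 + t/(N:ℝ))) atTop (𝓝 t) := by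
    have h := h1.add (h2.const_mul (t + 1/2))
    rw [mul_zero, add_zero] at h
    exact h.congr fun N => by ring
  have h5 := Real.BohrMollerup.tendsto_log_gamma ht
  have H := (((h5.sub (tendsto_const_nhds (x := (t - 1/2) * Real.log t))).sub
      stirling_log_tendsto).sub (tendsto_const_nhds (x := (1/2) * Real.log 2))).add h4
  rw [show Real.log (Real.Gamma t) - (t - 1/2) * Real.log t + t - (1/2) * Real.log 2
      - (1/2) * Real.log π
    = (((Real.log (Real.Gamma t) - (t - 1/2) * Real.log t) - (1/2) * Real.log π)
      - (1/2) * Real.log 2) + t by ring]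
  exact H

lemma J_val {t : ℝ} (ht : 0 < t) :
    J t = Real.log (Real.Gamma t) - (t - 1/2) * Real.log t + t
      - (1/2) * Real.log 2 - (1/2) * Real.log π :=
  tendsto_nhds_unique (S_tendsto_J ht) (S_tendsto_RHS ht)


end BinetAux

open BinetAux


open BinetAux

theorem binet_type_integral (a t : ℝ) (ha : 0 < a) (ht : 0 < t) :
    ∫ u in Set.Ioi (0 : ℝ),
        ((1 / (Real.exp u - 1) - 1 / u + 1 / 2) * Real.exp (-(t * u)) / u
          + (Real.exp (-(u * a)) - Real.exp (-(t * u))) / (2 * u))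
      = Real.log (Real.Gamma t) - (t - 1 / 2) * Real.log t + t
          - (1 / 2) * Real.log (2 * π) + (1 / 2) * Real.log (t / a) := by
  have hcong : ∀ u ∈ Set.Ioi (0:ℝ),
      (1 / (Real.exp u - 1) - 1 / u + 1 / 2) * Real.exp (-(t * u)) / u
          + (Real.exp (-(u * a)) - Real.exp (-(t * u))) / (2 * u)
      = g u * Real.exp (-(t * u)) / u
          + ((Real.exp (-(a * u)) - Real.exp (-(t * u))) / u) / 2 := by
    intro u hu
    have hu' := Set.mem_Ioi.mp hu
    rw [g, mul_comm u a]
    rw [one_div, one_div]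
    rw [show (Real.exp (-(a * u)) - Real.exp (-(t * u))) / (2 * u)
      = ((Real.exp (-(a * u)) - Real.exp (-(t * u))) / u) / 2 by
        rw [div_div]; ring_nf]
  rw [setIntegral_congr_fun measurableSet_Ioi hcong,
    integral_add (int_J ht) ((int_frullani ha ht).div_const 2),
    integral_div, frullani ha ht]
  have hJ := J_val ht
  rw [show (∫ u in Set.Ioi (0:ℝ), g u * Real.exp (-(t * u)) / u) = J t from rfl, hJ]
  rw [Real.log_mul two_ne_zero (ne_of_gt Real.pi_pos)]
  ring
end

section
/- lim_{t→∞} e^t Γ(t+1) / ( t^t √(t+1) ) = √(2π), where t ranges over positive reals. -/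
open Real MeasureTheory Filter Topology

lemma log_est {m d : ℝ} (hm : 0 < m) (hd : 0 ≤ d) :
    d - d * d / m ≤ m * (Real.log (m + d) - Real.log m) ∧
      m * (Real.log (m + d) - Real.log m) ≤ d := by
  have hmd : 0 < m + d := by linarith
  constructor
  · have h1 : Real.log (m / (m + d)) ≤ m / (m + d) - 1 :=
      Real.log_le_sub_one_of_pos (by positivity)
    rw [Real.log_div hm.ne' hmd.ne'] at h1
    have h2 : Real.log (m + d) - Real.log m ≥ 1 - m / (m + d) := by linarith
    have h3 : 1 - m / (m + d) = d / (m + d) := by field_simp; ring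
    rw [h3] at h2
    have h4 : d - d * d / m ≤ m * (d / (m + d)) := by
      rw [show d - d * d / m = (d * m - d * d) / m by field_simp,
        show m * (d / (m + d)) = m * d / (m + d) by ring,
        div_le_div_iff₀ hm hmd]
      nlinarith
    nlinarith [mul_le_mul_of_nonneg_left h2 hm.le]
  · have h1 : Real.log ((m + d) / m) ≤ (m + d) / m - 1 :=
      Real.log_le_sub_one_of_pos (by positivity)
    rw [Real.log_div hmd.ne' hm.ne'] at h1
    have h3 : (m + d) / m - 1 = d / m := by field_simp; ring
    rw [h3] at h1
    nlinarith [mul_le_mul_of_nonneg_left h1 hm.le, mul_div_cancel₀ d hm.ne']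

lemma log_factorial_eq (n : ℕ) (hn : 1 ≤ n) :
    Real.log (Nat.factorial n : ℝ) = Real.log (Stirling.stirlingSeq n)
      + (1/2) * Real.log (2*n) + n * Real.log n - n := by
  have hn0 : 0 < (n : ℝ) := by exact_mod_cast hn
  have hfac : (0:ℝ) < (Nat.factorial n : ℝ) := by exact_mod_cast Nat.factorial_pos n
  have hs : (0:ℝ) < Real.sqrt (2 * n) := Real.sqrt_pos.2 (by positivity)
  have hp : (0:ℝ) < ((n : ℝ) / Real.exp 1) ^ n := by positivity
  rw [Stirling.stirlingSeq, Real.log_div hfac.ne' (by positivity),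
    Real.log_mul hs.ne' hp.ne', Real.log_sqrt (by positivity), Real.log_pow,
    Real.log_div hn0.ne' (Real.exp_pos 1).ne', Real.log_exp]
  ring

lemma gamma_log_upper {n : ℕ} {t : ℝ} (h1 : (n:ℝ) ≤ t) (h2 : t < n+1) :
    Real.log (Real.Gamma (t+1)) ≤ Real.log (Nat.factorial n : ℝ) + (t - n) * Real.log (n+1) := by
  set θ : ℝ := t - n with hθ
  have hθ0 : 0 ≤ θ := by simp [hθ]; linarith
  have hθ1 : θ ≤ 1 := by simp [hθ]; linarith
  have hc := Real.convexOn_log_Gamma.2 (x := (n:ℝ)+1) (y := (n:ℝ)+2)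
    (Set.mem_Ioi.2 (by positivity)) (Set.mem_Ioi.2 (by positivity))
    (by linarith : (0:ℝ) ≤ 1 - θ) hθ0 (by ring)
  have he : (1-θ) • ((n:ℝ)+1) + θ • ((n:ℝ)+2) = t + 1 := by
    simp only [smul_eq_mul]; ring
  rw [he] at hc
  simp only [Function.comp_apply, smul_eq_mul] at hc
  have hg1 : Real.Gamma ((n:ℝ)+1) = (Nat.factorial n : ℝ) := Real.Gamma_nat_eq_factorial n
  have hg2 : Real.Gamma ((n:ℝ)+2) = (Nat.factorial (n+1) : ℝ) := by
    have := Real.Gamma_nat_eq_factorial (n+1)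
    rw [← this]; push_cast; ring_nf
  rw [hg1, hg2] at hc
  have hfac : Real.log (Nat.factorial (n+1) : ℝ)
      = Real.log ((n:ℝ)+1) + Real.log (Nat.factorial n : ℝ) := by
    rw [Nat.factorial_succ]
    push_cast
    rw [Real.log_mul (by positivity) (by exact_mod_cast (Nat.factorial_pos n).ne')]
  rw [hfac] at hc
  nlinarith [hc]

lemma gamma_log_lower {n : ℕ} {t : ℝ} (h1 : (n:ℝ) ≤ t) (h2 : t < n+1) :
    Real.log (Nat.factorial (n+1) : ℝ)
      ≤ Real.log (Real.Gamma (t+1)) + (1 - (t - n)) * Real.log (t+1) := by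
  set θ : ℝ := t - n with hθ
  have hn0 : (0:ℝ) ≤ n := Nat.cast_nonneg n
  have hθ0 : 0 ≤ θ := by simp [hθ]; linarith
  have hθ1 : θ ≤ 1 := by simp [hθ]; linarith
  have ht1 : (0:ℝ) < t + 1 := by linarith
  have hc := Real.convexOn_log_Gamma.2 (x := t+1) (y := t+2)
    (Set.mem_Ioi.2 (by linarith)) (Set.mem_Ioi.2 (by linarith))
    hθ0 (by linarith : (0:ℝ) ≤ 1 - θ) (by ring)
  have he : θ • (t+1) + (1-θ) • (t+2) = (n:ℝ) + 2 := by
    simp only [smul_eq_mul]; ring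
  rw [he] at hc
  simp only [Function.comp_apply, smul_eq_mul] at hc
  have hg2 : Real.Gamma ((n:ℝ)+2) = (Nat.factorial (n+1) : ℝ) := by
    have := Real.Gamma_nat_eq_factorial (n+1)
    rw [← this]; push_cast; ring_nf
  rw [hg2] at hc
  have hgadd : Real.Gamma (t+2) = (t+1) * Real.Gamma (t+1) := by
    have := Real.Gamma_add_one (s := t+1) ht1.ne'
    rw [← this]; ring_nf
  have hgpos : 0 < Real.Gamma (t+1) := Real.Gamma_pos_of_pos (by linarith)
  rw [hgadd, Real.log_mul ht1.ne' hgpos.ne'] at hc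
  nlinarith [hc]

lemma aux_ratio (a : ℝ) : Tendsto (fun t : ℝ => (2*t + a)/(t+1)) atTop (𝓝 2) := by
  have h : Tendsto (fun t : ℝ => 2 + (a-2)*(t+1)⁻¹) atTop (𝓝 (2 + (a-2)*0)) :=
    tendsto_const_nhds.add
      (((tendsto_atTop_add_const_right atTop 1 tendsto_id).inv_tendsto_atTop).const_mul _)
  rw [mul_zero, add_zero] at h
  apply h.congr'
  filter_upwards [eventually_gt_atTop (0:ℝ)] with t ht
  field_simp
  ring

lemma aux_log (k : ℕ) :
    Tendsto (fun t : ℝ => Real.log (2*((⌊t⌋₊:ℝ)+k)) - Real.log (t+1)) atTop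
      (𝓝 (Real.log 2)) := by
  have hlo : Tendsto (fun t : ℝ => Real.log ((2*t + (-2))/(t+1))) atTop (𝓝 (Real.log 2)) :=
    ((Real.continuousAt_log two_ne_zero).tendsto).comp (aux_ratio (-2))
  have hhi : Tendsto (fun t : ℝ => Real.log ((2*t + 2*k)/(t+1))) atTop (𝓝 (Real.log 2)) :=
    ((Real.continuousAt_log two_ne_zero).tendsto).comp (aux_ratio (2*k))
  refine tendsto_of_tendsto_of_tendsto_of_le_of_le' hlo hhi ?_ ?_
  · filter_upwards [eventually_ge_atTop (2:ℝ)] with t ht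
    have ht1 : (0:ℝ) < t + 1 := by linarith
    have hfl : t - 1 < (⌊t⌋₊:ℝ) := by linarith [Nat.sub_one_lt_floor t]
    have hknn : (0:ℝ) ≤ (k:ℝ) := Nat.cast_nonneg k
    have hpos : (0:ℝ) < 2*((⌊t⌋₊:ℝ)+k) := by linarith
    rw [show Real.log (2*((⌊t⌋₊:ℝ)+k)) - Real.log (t+1)
        = Real.log ((2*((⌊t⌋₊:ℝ)+k))/(t+1)) by
          rw [Real.log_div hpos.ne' ht1.ne']]
    apply Real.log_le_log (div_pos (by linarith) ht1)
    gcongr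
    linarith
  · filter_upwards [eventually_ge_atTop (2:ℝ)] with t ht
    have ht1 : (0:ℝ) < t + 1 := by linarith
    have hfl2 : t - 1 < (⌊t⌋₊:ℝ) := by linarith [Nat.sub_one_lt_floor t]
    have hfl : (⌊t⌋₊:ℝ) ≤ t := Nat.floor_le (by linarith)
    have hknn : (0:ℝ) ≤ (k:ℝ) := Nat.cast_nonneg k
    have hpos : (0:ℝ) < 2*((⌊t⌋₊:ℝ)+k) := by linarith
    rw [show Real.log (2*((⌊t⌋₊:ℝ)+k)) - Real.log (t+1)
        = Real.log ((2*((⌊t⌋₊:ℝ)+k))/(t+1)) by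
          rw [Real.log_div hpos.ne' ht1.ne']]
    apply Real.log_le_log (div_pos hpos ht1)
    gcongr
    linarith

theorem gamma_stirling_limit :
    Tendsto (fun t : ℝ => Real.exp t * Real.Gamma (t + 1) / (t ^ t * Real.sqrt (t + 1)))
      atTop (nhds (Real.sqrt (2 * π))) := by
  have hsqrtpi : (0:ℝ) < Real.sqrt π := Real.sqrt_pos.2 Real.pi_pos
  have hlogst : Tendsto (fun n : ℕ => Real.log (Stirling.stirlingSeq n)) atTop
      (𝓝 (Real.log (Real.sqrt π))) :=
    ((Real.continuousAt_log hsqrtpi.ne').tendsto).comp Stirling.tendsto_stirlingSeq_sqrt_pi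
  have hst0 : Tendsto (fun t : ℝ => Real.log (Stirling.stirlingSeq ⌊t⌋₊)) atTop
      (𝓝 (Real.log (Real.sqrt π))) := hlogst.comp tendsto_nat_floor_atTop
  have hst1 : Tendsto (fun t : ℝ => Real.log (Stirling.stirlingSeq (⌊t⌋₊ + 1))) atTop
      (𝓝 (Real.log (Real.sqrt π))) :=
    (hlogst.comp (tendsto_add_atTop_nat 1)).comp tendsto_nat_floor_atTop
  have h3n : Tendsto (fun t : ℝ => 3/((⌊t⌋₊:ℝ))) atTop (𝓝 0) := by
    have h := ((tendsto_natCast_atTop_atTop (R := ℝ)).comp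
      (tendsto_nat_floor_atTop (α := ℝ))).inv_tendsto_atTop
    have h2 := h.const_mul (3:ℝ)
    simp only [mul_zero] at h2
    refine h2.congr fun t => ?_
    simp [div_eq_mul_inv, Function.comp]
  have haux0 : Tendsto (fun t : ℝ => Real.log (2*(⌊t⌋₊:ℝ)) - Real.log (t+1)) atTop
      (𝓝 (Real.log 2)) := by simpa using aux_log 0
  have haux1 : Tendsto (fun t : ℝ => Real.log (2*((⌊t⌋₊:ℝ)+1)) - Real.log (t+1)) atTop
      (𝓝 (Real.log 2)) := by simpa using aux_log 1
  have hHI : Tendsto (fun t : ℝ => Real.log (Stirling.stirlingSeq ⌊t⌋₊)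
      + (1/2)*(Real.log (2*(⌊t⌋₊:ℝ)) - Real.log (t+1)) + 3/((⌊t⌋₊:ℝ))) atTop (𝓝 (Real.log (Real.sqrt π) + (1/2) * Real.log 2)) := by
    have := (hst0.add (haux0.const_mul (1/2))).add h3n
    simpa using this
  have hLO : Tendsto (fun t : ℝ => Real.log (Stirling.stirlingSeq (⌊t⌋₊+1))
      + (1/2)*(Real.log (2*((⌊t⌋₊:ℝ)+1)) - Real.log (t+1)) - 3/((⌊t⌋₊:ℝ))) atTop (𝓝 (Real.log (Real.sqrt π) + (1/2) * Real.log 2)) := by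
    have := (hst1.add (haux1.const_mul (1/2))).sub h3n
    simpa using this
  have hc : Real.log (Real.sqrt π) + (1/2) * Real.log 2 = Real.log (Real.sqrt (2*π)) := by
    rw [Real.log_sqrt Real.pi_pos.le, Real.log_sqrt (by positivity),
      Real.log_mul two_ne_zero Real.pi_pos.ne']
    ring
  rw [hc] at hHI hLO
  have hL : Tendsto (fun t : ℝ => t + Real.log (Real.Gamma (t+1)) - t * Real.log t
      - (1/2)*Real.log (t+1)) atTop (𝓝 (Real.log (Real.sqrt (2*π)))) := by
    refine tendsto_of_tendsto_of_tendsto_of_le_of_le' hLO hHI ?_ ?_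
    · -- lower bound : LO ≤ L
      filter_upwards [eventually_ge_atTop (2:ℝ)] with t ht
      set n : ℕ := ⌊t⌋₊ with hn
      have hfl2 : t - 1 < (n:ℝ) := by linarith [Nat.sub_one_lt_floor t]
      have hn1 : (1:ℝ) ≤ (n:ℝ) := by linarith
      have hnt : (n:ℝ) ≤ t := Nat.floor_le (by linarith)
      have htn : t < (n:ℝ)+1 := Nat.lt_floor_add_one t
      have hnpos : (0:ℝ) < n := by linarith
      have htpos : (0:ℝ) < t := by linarith
      have hθ0 : (0:ℝ) ≤ t - n := by linarith
      have hθ1 : t - (n:ℝ) ≤ 1 := by linarith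
      have glow := gamma_log_lower hnt htn
      have fac := log_factorial_eq (n+1) (by omega)
      push_cast at fac
      have hP := (log_est (m := (n:ℝ)+1) (d := t - n) (by linarith) hθ0).2
      rw [show ((n:ℝ)+1) + (t - n) = t + 1 by ring] at hP
      have hQ := (log_est (m := t) (d := 1) htpos zero_le_one).1
      have hti : 1*1/t ≤ 3/(n:ℝ) := by
        rw [div_le_div_iff₀ htpos hnpos]
        nlinarith
      have key : -(3/(n:ℝ)) ≤ (t - ((n:ℝ)+1)) + ((n:ℝ)+1)*Real.log ((n:ℝ)+1)
          - (1-(t-(n:ℝ)))*Real.log (t+1) - t*Real.log t := by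
        ring_nf at hP hQ hti ⊢
        linarith
      linarith [glow, fac, key]
    · -- upper bound : L ≤ HI
      filter_upwards [eventually_ge_atTop (2:ℝ)] with t ht
      set n : ℕ := ⌊t⌋₊ with hn
      have hfl2 : t - 1 < (n:ℝ) := by linarith [Nat.sub_one_lt_floor t]
      have hn1 : (1:ℝ) ≤ (n:ℝ) := by linarith
      have hnt : (n:ℝ) ≤ t := Nat.floor_le (by linarith)
      have htn : t < (n:ℝ)+1 := Nat.lt_floor_add_one t
      have hnpos : (0:ℝ) < n := by linarith
      have htpos : (0:ℝ) < t := by linarith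
      have hθ0 : (0:ℝ) ≤ t - n := by linarith
      have hθ1 : t - (n:ℝ) ≤ 1 := by linarith
      have gup := gamma_log_upper hnt htn
      have fac := log_factorial_eq n (by exact_mod_cast hn1)
      have hA := (log_est (m := (n:ℝ)) (d := t - n) hnpos hθ0).1
      rw [show (n:ℝ) + (t - n) = t by ring] at hA
      have hsq : (t-(n:ℝ))*(t-(n:ℝ))/(n:ℝ) ≤ 1/(n:ℝ) := by
        gcongr
        nlinarith
      have hA' : (t - (n:ℝ)) - 1/(n:ℝ) ≤ (n:ℝ)*(Real.log t - Real.log n) := by linarith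
      have hB := (log_est (m := (n:ℝ)) (d := 1) hnpos zero_le_one).2
      have hB' : Real.log ((n:ℝ)+1) - Real.log (n:ℝ) ≤ 1/(n:ℝ) := by
        rw [le_div_iff₀ hnpos]; nlinarith [hB]
      have hE : Real.log (n:ℝ) ≤ Real.log t := Real.log_le_log hnpos hnt
      have hC : Real.log t ≤ Real.log ((n:ℝ)+1) := Real.log_le_log htpos (by linarith)
      have hD : (t-(n:ℝ))*(Real.log ((n:ℝ)+1) - Real.log t)
          ≤ 1*(Real.log ((n:ℝ)+1) - Real.log t) :=
        mul_le_mul_of_nonneg_right hθ1 (by linarith)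
      have key : (t - (n:ℝ)) + (n:ℝ)*Real.log (n:ℝ) + (t-(n:ℝ))*Real.log ((n:ℝ)+1)
          - t*Real.log t ≤ 3/(n:ℝ) := by
        ring_nf at hA' hD hB' hC ⊢
        linarith
      linarith [gup, fac, key]
  have hpos2 : (0:ℝ) < Real.sqrt (2*π) := Real.sqrt_pos.2 (by positivity)
  have hexp := (Real.continuous_exp.continuousAt
    (x := Real.log (Real.sqrt (2*π)))).tendsto.comp hL
  rw [Real.exp_log hpos2] at hexp
  refine hexp.congr' ?_
  filter_upwards [eventually_ge_atTop (1:ℝ)] with t ht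
  have ht0 : (0:ℝ) < t := by linarith
  have hG : 0 < Real.Gamma (t+1) := Real.Gamma_pos_of_pos (by linarith)
  have hsq : Real.exp ((1/2)*Real.log (t+1)) = Real.sqrt (t+1) := by
    rw [Real.sqrt_eq_rpow, Real.rpow_def_of_pos (by linarith)]
    ring_nf
  show Real.exp (t + Real.log (Real.Gamma (t+1)) - t*Real.log t - (1/2)*Real.log (t+1))
      = Real.exp t * Real.Gamma (t+1) / (t ^ t * Real.sqrt (t+1))
  rw [show t + Real.log (Real.Gamma (t+1)) - t*Real.log t - (1/2)*Real.log (t+1)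
      = (t + Real.log (Real.Gamma (t+1))) - (t*Real.log t + (1/2)*Real.log (t+1)) by ring,
    Real.exp_sub, Real.exp_add, Real.exp_add, Real.exp_log hG,
    show t*Real.log t = Real.log t * t by ring, ← Real.rpow_def_of_pos ht0, hsq]
end
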